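/- arXiv:1811.09165 — 8 statements merged into one kernel-verified Lean document; each statement's English description precedes it below -/
import Mathlib

section
/- Let F be a finite field. For every n ≥ 1 there exist sets P ⊆ [2n+1]×[3n+1] and Q ⊆ [3n+1]×[2n+1] with the following two properties. (i) For all A ∈ F^{(2n+1)×(3n+1)} and B ∈ F^{(3n+1)×(2n+1)} with A_{i,j} = 0 for all (i,j) ∈ P, B_{i,j} = 0 for all (i,j) ∈ Q, and A·B = I_{2n+1}: the entry A_{1,3n+1} is nonzero, and for every k with 0 ≤ k ≤ n−1, at least one of the entries A_{1,3k+1} and A_{1,3k+2} equals 0. (ii) For every function v : {0,…,n−1} → {1,2} there exist such A and B (satisfying the zero constraints and A·B = I_{2n+1}) with A_{1,3k+v(k)} ≠ 0 for all 0 ≤ k ≤ n−1. -/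
/-- Allowed support for `A`: column `3k` may be nonzero in rows `0, 2k+1`;
column `3k+1` in rows `0, 2k+2`; column `3k+2` in rows `2k+1, 2k+2`;
column `3n` in row `0`. -/
def okA (n i j : ℕ) : Prop :=
  (j = 3*n ∧ i = 0) ∨ (j < 3*n ∧
    ((j % 3 = 0 ∧ (i = 0 ∨ i = 2*(j/3)+1)) ∨
     (j % 3 = 1 ∧ (i = 0 ∨ i = 2*(j/3)+2)) ∨
     (j % 3 = 2 ∧ (i = 2*(j/3)+1 ∨ i = 2*(j/3)+2))))

/-- Allowed support for `B`: row `3k` may be nonzero in column `2k+1`;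
row `3k+1` in column `2k+2`; row `3k+2` in columns `2k+1, 2k+2`;
row `3n` in column `0`. -/
def okB (n j l : ℕ) : Prop :=
  (j = 3*n ∧ l = 0) ∨ (j < 3*n ∧
    ((j % 3 = 0 ∧ l = 2*(j/3)+1) ∨
     (j % 3 = 1 ∧ l = 2*(j/3)+2) ∨
     (j % 3 = 2 ∧ (l = 2*(j/3)+1 ∨ l = 2*(j/3)+2))))

/-- Support of the witness matrix `A` for a given choice function `v`. -/
def condA (v : ℕ → ℕ) (n i j : ℕ) : Prop :=
  (j = 3*n ∧ i = 0) ∨ (j < 3*n ∧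
    ((j % 3 = 0 ∧ ((i = 0 ∧ v (j/3) = 1) ∨ (i = 2*(j/3)+1 ∧ v (j/3) = 2))) ∨
     (j % 3 = 1 ∧ ((i = 0 ∧ v (j/3) = 2) ∨ (i = 2*(j/3)+2 ∧ v (j/3) = 1))) ∨
     (j % 3 = 2 ∧ ((i = 2*(j/3)+1 ∧ v (j/3) = 1) ∨ (i = 2*(j/3)+2 ∧ v (j/3) = 2)))))

/-- Support of the witness matrix `B` for a given choice function `v`. -/
def condB (v : ℕ → ℕ) (n j l : ℕ) : Prop :=
  (j = 3*n ∧ l = 0) ∨ (j < 3*n ∧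
    ((j % 3 = 0 ∧ l = 2*(j/3)+1 ∧ v (j/3) = 2) ∨
     (j % 3 = 1 ∧ l = 2*(j/3)+2 ∧ v (j/3) = 1) ∨
     (j % 3 = 2 ∧ ((l = 2*(j/3)+1 ∧ v (j/3) = 1) ∨ (l = 2*(j/3)+2 ∧ v (j/3) = 2)))))

/-- **Variable block lemma.** For every `n ≥ 1` there is a constrained-invertibility
instance `(P, Q)` over `F^{(2n+1)×(3n+1)} × F^{(3n+1)×(2n+1)}` such that in every solution
`A·B = I_{2n+1}` respecting the zero patterns `P`, `Q`: the entry `A_{1,3n+1}` is nonzero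
and for each `k < n` at least one of `A_{1,3k+1}`, `A_{1,3k+2}` is zero; and for every
choice `v : {0,…,n-1} → {1,2}` there is a solution with `A_{1,3k+v(k)} ≠ 0` for all `k`.
(Indices in the Lean statement are 0-based.) -/
theorem stmt_2 (F : Type) [Field F] [Fintype F] (n : ℕ) (hn : 1 ≤ n) :
    ∃ (P : Set (Fin (2*n+1) × Fin (3*n+1))) (Q : Set (Fin (3*n+1) × Fin (2*n+1))),
      (∀ (A : Matrix (Fin (2*n+1)) (Fin (3*n+1)) F)
         (B : Matrix (Fin (3*n+1)) (Fin (2*n+1)) F),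
         (∀ ij ∈ P, A ij.1 ij.2 = 0) → (∀ ij ∈ Q, B ij.1 ij.2 = 0) → A * B = 1 →
         A ⟨0, by omega⟩ ⟨3*n, by omega⟩ ≠ 0 ∧
         ∀ k (hk : k < n),
           A ⟨0, by omega⟩ ⟨3*k, by omega⟩ = 0 ∨ A ⟨0, by omega⟩ ⟨3*k+1, by omega⟩ = 0) ∧
      (∀ (v : ℕ → ℕ) (hv : ∀ k, k < n → v k = 1 ∨ v k = 2),
        ∃ (A : Matrix (Fin (2*n+1)) (Fin (3*n+1)) F)
          (B : Matrix (Fin (3*n+1)) (Fin (2*n+1)) F),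
          (∀ ij ∈ P, A ij.1 ij.2 = 0) ∧ (∀ ij ∈ Q, B ij.1 ij.2 = 0) ∧ A * B = 1 ∧
          ∀ k (hk : k < n),
            A ⟨0, by omega⟩ ⟨3*k + v k - 1, by have := hv k hk; omega⟩ ≠ 0) := by
  classical
  refine ⟨{ij | ¬ okA n ij.1.1 ij.2.1}, {ij | ¬ okB n ij.1.1 ij.2.1}, ?_, ?_⟩
  · -- Part 1: forced properties of every solution
    intro A B hA0 hB0 hAB
    have hA : ∀ (i : Fin (2*n+1)) (j : Fin (3*n+1)), ¬ okA n i.1 j.1 → A i j = 0 :=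
      fun i j h => hA0 (i, j) h
    have hB : ∀ (j : Fin (3*n+1)) (l : Fin (2*n+1)), ¬ okB n j.1 l.1 → B j l = 0 :=
      fun j l h => hB0 (j, l) h
    have heq : ∀ (i l : Fin (2*n+1)),
        ∑ j, A i j * B j l = if i = l then (1:F) else 0 := by
      intro i l
      rw [← Matrix.mul_apply, hAB, Matrix.one_apply]
    constructor
    · -- A 0 (3n) ≠ 0
      have h := heq ⟨0, by omega⟩ ⟨0, by omega⟩
      rw [Fintype.sum_eq_single (⟨3*n, by omega⟩ : Fin (3*n+1)) ?_, if_pos rfl] at h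
      · intro h0
        rw [h0, zero_mul] at h
        exact zero_ne_one h
      · intro j hj
        have h1 : (j:ℕ) ≠ 3*n := fun he => hj (Fin.ext he)
        have hj2 := j.2
        rw [hB j _ (by simp only [okB]; omega), mul_zero]
    · intro k hk
      by_contra hcon
      push_neg at hcon
      obtain ⟨ha, hb⟩ := hcon
      have hc1 : ∀ i : Fin (2*n+1), ∑ j, A i j * B j ⟨2*k+1, by omega⟩ =
          A i ⟨3*k, by omega⟩ * B ⟨3*k, by omega⟩ ⟨2*k+1, by omega⟩ +
          A i ⟨3*k+2, by omega⟩ * B ⟨3*k+2, by omega⟩ ⟨2*k+1, by omega⟩ := by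
        intro i
        refine Fintype.sum_eq_add _ _ (by simp only [ne_eq, Fin.mk.injEq]; omega) ?_
        rintro j ⟨hj1, hj2⟩
        have h1 : (j:ℕ) ≠ 3*k := fun he => hj1 (Fin.ext he)
        have h2 : (j:ℕ) ≠ 3*k+2 := fun he => hj2 (Fin.ext he)
        have hjlt := j.2
        rw [hB j _ (by simp only [okB]; omega), mul_zero]
      have hc2 : ∀ i : Fin (2*n+1), ∑ j, A i j * B j ⟨2*k+2, by omega⟩ =
          A i ⟨3*k+1, by omega⟩ * B ⟨3*k+1, by omega⟩ ⟨2*k+2, by omega⟩ +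
          A i ⟨3*k+2, by omega⟩ * B ⟨3*k+2, by omega⟩ ⟨2*k+2, by omega⟩ := by
        intro i
        refine Fintype.sum_eq_add _ _ (by simp only [ne_eq, Fin.mk.injEq]; omega) ?_
        rintro j ⟨hj1, hj2⟩
        have h1 : (j:ℕ) ≠ 3*k+1 := fun he => hj1 (Fin.ext he)
        have h2 : (j:ℕ) ≠ 3*k+2 := fun he => hj2 (Fin.ext he)
        have hjlt := j.2
        rw [hB j _ (by simp only [okB]; omega), mul_zero]
      -- equation (0, 2k+1): a * x = 0, so x = 0
      have e1 := heq ⟨0, by omega⟩ ⟨2*k+1, by omega⟩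
      rw [hc1, if_neg (by simp only [ne_eq, Fin.mk.injEq]; omega),
        hA ⟨0, by omega⟩ ⟨3*k+2, by omega⟩ (by simp only [okA]; omega), zero_mul,
        add_zero] at e1
      have hx : B ⟨3*k, by omega⟩ ⟨2*k+1, by omega⟩ = 0 := by
        rcases mul_eq_zero.mp e1 with h | h
        · exact absurd h ha
        · exact h
      -- equation (0, 2k+2): b * y = 0, so y = 0
      have e2 := heq ⟨0, by omega⟩ ⟨2*k+2, by omega⟩
      rw [hc2, if_neg (by simp only [ne_eq, Fin.mk.injEq]; omega),
        hA ⟨0, by omega⟩ ⟨3*k+2, by omega⟩ (by simp only [okA]; omega), zero_mul,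
        add_zero] at e2
      have hy : B ⟨3*k+1, by omega⟩ ⟨2*k+2, by omega⟩ = 0 := by
        rcases mul_eq_zero.mp e2 with h | h
        · exact absurd h hb
        · exact h
      -- equation (2k+1, 2k+1): r * u = 1
      have e3 := heq ⟨2*k+1, by omega⟩ ⟨2*k+1, by omega⟩
      rw [hc1, if_pos rfl, hx, mul_zero, zero_add] at e3
      -- equation (2k+1, 2k+2): r * w = 0, and r ≠ 0, so w = 0
      have e4 := heq ⟨2*k+1, by omega⟩ ⟨2*k+2, by omega⟩
      rw [hc2, if_neg (by simp only [ne_eq, Fin.mk.injEq]; omega),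
        hA ⟨2*k+1, by omega⟩ ⟨3*k+1, by omega⟩ (by simp only [okA]; omega), zero_mul,
        zero_add] at e4
      have hr : A ⟨2*k+1, by omega⟩ ⟨3*k+2, by omega⟩ ≠ 0 := by
        intro h0
        rw [h0, zero_mul] at e3
        exact zero_ne_one e3
      have hw : B ⟨3*k+2, by omega⟩ ⟨2*k+2, by omega⟩ = 0 := by
        rcases mul_eq_zero.mp e4 with h | h
        · exact absurd h hr
        · exact h
      -- equation (2k+2, 2k+2): q * y + s * w = 1, contradiction
      have e5 := heq ⟨2*k+2, by omega⟩ ⟨2*k+2, by omega⟩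
      rw [hc2, if_pos rfl, hy, mul_zero, hw, mul_zero, add_zero] at e5
      exact zero_ne_one e5
  · -- Part 2: realizability
    intro v hv
    refine ⟨fun i j => if condA v n i.1 j.1 then (1:F) else 0,
            fun j l => if condB v n j.1 l.1 then (1:F) else 0, ?_, ?_, ?_, ?_⟩
    · rintro ⟨i, j⟩ hij
      simp only [Set.mem_setOf_eq] at hij
      dsimp only
      rw [if_neg]
      intro hc
      apply hij
      simp only [condA] at hc
      simp only [okA]
      generalize v ((j:ℕ)/3) = m at hc
      omega
    · rintro ⟨j, l⟩ hjl
      simp only [Set.mem_setOf_eq] at hjl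
      dsimp only
      rw [if_neg]
      intro hc
      apply hjl
      simp only [condB] at hc
      simp only [okB]
      generalize v ((j:ℕ)/3) = m at hc
      omega
    · -- A * B = 1
      ext i l
      erw [Matrix.mul_apply, Matrix.one_apply]
      have hl : (l:ℕ) = 0 ∨ ∃ k, k < n ∧ ((l:ℕ) = 2*k+1 ∨ (l:ℕ) = 2*k+2) := by
        have := l.2
        rcases Nat.eq_zero_or_pos (l:ℕ) with h | h
        · exact Or.inl h
        · exact Or.inr ⟨((l:ℕ)-1)/2, by omega, by omega⟩
      rcases hl with hl | ⟨k, hk, hl⟩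
      · -- column 0 of the identity
        rw [Fintype.sum_eq_single (⟨3*n, by omega⟩ : Fin (3*n+1)) ?_]
        · have hcB : condB v n (3*n) (l:ℕ) := Or.inl ⟨rfl, hl⟩
          rw [if_pos hcB]
          by_cases hi : (i:ℕ) = 0
          · have hcA : condA v n (i:ℕ) (3*n) := Or.inl ⟨rfl, hi⟩
            have hil : i = l := Fin.ext (by omega)
            rw [if_pos hcA, if_pos hil, mul_one]
          · have hcA : ¬ condA v n (i:ℕ) (3*n) := by
              rintro (⟨-, h⟩ | ⟨h, -⟩)
              exacts [hi h, by omega]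
            have hil : ¬ i = l := by intro h; rw [Fin.ext_iff] at h; omega
            rw [if_neg hcA, if_neg hil, zero_mul]
        · intro j hj
          have h1 : (j:ℕ) ≠ 3*n := fun he => hj (Fin.ext he)
          have hjlt := j.2
          have hcB : ¬ condB v n (j:ℕ) (l:ℕ) := by simp only [condB]; rintro (⟨h, h0⟩ | ⟨hlt, (⟨hm, hl2, -⟩ | ⟨hm, hl2, -⟩ | ⟨hm, (⟨hl2, -⟩ | ⟨hl2, -⟩)⟩)⟩) <;> omega
          rw [if_neg hcB, mul_zero]
      · have hd0 : (3*k)/3 = k := by omega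
        have hd1 : (3*k+1)/3 = k := by omega
        have hd2 : (3*k+2)/3 = k := by omega
        have hm0 : (3*k) % 3 = 0 := by omega
        have hm1 : (3*k+1) % 3 = 1 := by omega
        have hm2 : (3*k+2) % 3 = 2 := by omega
        rcases hl with hl | hl
        · -- column 2k+1 : nonzero rows of B are 3k and 3k+2
          rw [Fintype.sum_eq_add (⟨3*k, by omega⟩ : Fin (3*n+1)) (⟨3*k+2, by omega⟩ : Fin (3*n+1))
            (by simp only [ne_eq, Fin.mk.injEq]; omega) ?_]
          · rcases hv k hk with hvk | hvk
            · -- v k = 1 : B (3k) l = 0, B (3k+2) l = 1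
              have hcB0 : ¬ condB v n (3*k) (l:ℕ) := by
                simp only [condB, hd0, hm0, true_and, and_true, false_and, and_false, false_or, or_false]; generalize v k = m at hvk ⊢; omega
              have hcB2 : condB v n (3*k+2) (l:ℕ) := by
                simp only [condB, hd2, hm2, true_and, and_true, false_and, and_false, false_or, or_false]; generalize v k = m at hvk ⊢; omega
              rw [if_neg hcB0, mul_zero, zero_add, if_pos hcB2, mul_one]
              by_cases hi : (i:ℕ) = 2*k+1
              · have hcA : condA v n (i:ℕ) (3*k+2) := by
                  simp only [condA, hd2, hm2, true_and, and_true, false_and, and_false, false_or, or_false]; generalize v k = m at hvk ⊢; omega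
                have hil : i = l := Fin.ext (by omega)
                rw [if_pos hcA, if_pos hil]
              · have hcA : ¬ condA v n (i:ℕ) (3*k+2) := by
                  simp only [condA, hd2, hm2, true_and, and_true, false_and, and_false, false_or, or_false]; generalize v k = m at hvk ⊢; omega
                have hil : ¬ i = l := by intro h; rw [Fin.ext_iff] at h; omega
                rw [if_neg hcA, if_neg hil]
            · -- v k = 2 : B (3k) l = 1, B (3k+2) l = 0
              have hcB0 : condB v n (3*k) (l:ℕ) := by
                simp only [condB, hd0, hm0, true_and, and_true, false_and, and_false, false_or, or_false]; generalize v k = m at hvk ⊢; omega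
              have hcB2 : ¬ condB v n (3*k+2) (l:ℕ) := by
                simp only [condB, hd2, hm2, true_and, and_true, false_and, and_false, false_or, or_false]; generalize v k = m at hvk ⊢; omega
              rw [if_pos hcB0, mul_one, if_neg hcB2, mul_zero, add_zero]
              by_cases hi : (i:ℕ) = 2*k+1
              · have hcA : condA v n (i:ℕ) (3*k) := by
                  simp only [condA, hd0, hm0, true_and, and_true, false_and, and_false, false_or, or_false]; generalize v k = m at hvk ⊢; omega
                have hil : i = l := Fin.ext (by omega)
                rw [if_pos hcA, if_pos hil]
              · have hcA : ¬ condA v n (i:ℕ) (3*k) := by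
                  simp only [condA, hd0, hm0, true_and, and_true, false_and, and_false, false_or, or_false]; generalize v k = m at hvk ⊢; omega
                have hil : ¬ i = l := by intro h; rw [Fin.ext_iff] at h; omega
                rw [if_neg hcA, if_neg hil]
          · rintro j ⟨hj1, hj2⟩
            have h1 : (j:ℕ) ≠ 3*k := fun he => hj1 (Fin.ext he)
            have h2 : (j:ℕ) ≠ 3*k+2 := fun he => hj2 (Fin.ext he)
            have hjlt := j.2
            have hcB : ¬ condB v n (j:ℕ) (l:ℕ) := by simp only [condB]; rintro (⟨h, h0⟩ | ⟨hlt, (⟨hm, hl2, -⟩ | ⟨hm, hl2, -⟩ | ⟨hm, (⟨hl2, -⟩ | ⟨hl2, -⟩)⟩)⟩) <;> omega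
            rw [if_neg hcB, mul_zero]
        · -- column 2k+2 : nonzero rows of B are 3k+1 and 3k+2
          rw [Fintype.sum_eq_add (⟨3*k+1, by omega⟩ : Fin (3*n+1)) (⟨3*k+2, by omega⟩ : Fin (3*n+1))
            (by simp only [ne_eq, Fin.mk.injEq]; omega) ?_]
          · rcases hv k hk with hvk | hvk
            · -- v k = 1 : B (3k+1) l = 1, B (3k+2) l = 0
              have hcB1 : condB v n (3*k+1) (l:ℕ) := by
                simp only [condB, hd1, hm1, true_and, and_true, false_and, and_false, false_or, or_false]; generalize v k = m at hvk ⊢; omega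
              have hcB2 : ¬ condB v n (3*k+2) (l:ℕ) := by
                simp only [condB, hd2, hm2, true_and, and_true, false_and, and_false, false_or, or_false]; generalize v k = m at hvk ⊢; omega
              rw [if_pos hcB1, mul_one, if_neg hcB2, mul_zero, add_zero]
              by_cases hi : (i:ℕ) = 2*k+2
              · have hcA : condA v n (i:ℕ) (3*k+1) := by
                  simp only [condA, hd1, hm1, true_and, and_true, false_and, and_false, false_or, or_false]; generalize v k = m at hvk ⊢; omega
                have hil : i = l := Fin.ext (by omega)
                rw [if_pos hcA, if_pos hil]
              · have hcA : ¬ condA v n (i:ℕ) (3*k+1) := by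
                  simp only [condA, hd1, hm1, true_and, and_true, false_and, and_false, false_or, or_false]; generalize v k = m at hvk ⊢; omega
                have hil : ¬ i = l := by intro h; rw [Fin.ext_iff] at h; omega
                rw [if_neg hcA, if_neg hil]
            · -- v k = 2 : B (3k+1) l = 0, B (3k+2) l = 1
              have hcB1 : ¬ condB v n (3*k+1) (l:ℕ) := by
                simp only [condB, hd1, hm1, true_and, and_true, false_and, and_false, false_or, or_false]; generalize v k = m at hvk ⊢; omega
              have hcB2 : condB v n (3*k+2) (l:ℕ) := by
                simp only [condB, hd2, hm2, true_and, and_true, false_and, and_false, false_or, or_false]; generalize v k = m at hvk ⊢; omega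
              rw [if_neg hcB1, mul_zero, zero_add, if_pos hcB2, mul_one]
              by_cases hi : (i:ℕ) = 2*k+2
              · have hcA : condA v n (i:ℕ) (3*k+2) := by
                  simp only [condA, hd2, hm2, true_and, and_true, false_and, and_false, false_or, or_false]; generalize v k = m at hvk ⊢; omega
                have hil : i = l := Fin.ext (by omega)
                rw [if_pos hcA, if_pos hil]
              · have hcA : ¬ condA v n (i:ℕ) (3*k+2) := by
                  simp only [condA, hd2, hm2, true_and, and_true, false_and, and_false, false_or, or_false]; generalize v k = m at hvk ⊢; omega
                have hil : ¬ i = l := by intro h; rw [Fin.ext_iff] at h; omega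
                rw [if_neg hcA, if_neg hil]
          · rintro j ⟨hj1, hj2⟩
            have h1 : (j:ℕ) ≠ 3*k+1 := fun he => hj1 (Fin.ext he)
            have h2 : (j:ℕ) ≠ 3*k+2 := fun he => hj2 (Fin.ext he)
            have hjlt := j.2
            have hcB : ¬ condB v n (j:ℕ) (l:ℕ) := by simp only [condB]; rintro (⟨h, h0⟩ | ⟨hlt, (⟨hm, hl2, -⟩ | ⟨hm, hl2, -⟩ | ⟨hm, (⟨hl2, -⟩ | ⟨hl2, -⟩)⟩)⟩) <;> omega
            rw [if_neg hcB, mul_zero]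
    · intro k hk
      show (if condA v n 0 (3*k + v k - 1) then (1:F) else 0) ≠ 0
      have h : condA v n 0 (3*k + v k - 1) := by
        rcases hv k hk with hvk | hvk
        · rw [show 3*k + v k - 1 = 3*k by omega]
          simp only [condA]
          rw [show (3*k)/3 = k by omega, show (3*k) % 3 = 0 by omega]
          simp only [true_and, and_true, false_and, and_false, false_or, or_false]
          generalize v k = m at hvk ⊢
          omega
        · rw [show 3*k + v k - 1 = 3*k+1 by omega]
          simp only [condA]
          rw [show (3*k+1)/3 = k by omega, show (3*k+1) % 3 = 1 by omega]
          simp only [true_and, and_true, false_and, and_false, false_or, or_false]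
          generalize v k = m at hvk ⊢
          omega
      rw [if_pos h]
      exact one_ne_zero
end

section
/- Let F be a finite field, let n, m ≥ 1, set s = n + m, and let P ⊆ [n]×[s] and Q ⊆ [s]×[n]. Then there exist A ∈ F^{n×s} and B ∈ F^{s×n} with A_{i,j} = 0 for all (i,j) ∈ P, B_{i,j} = 0 for all (i,j) ∈ Q, and A·B = I_n, if and only if there exist square matrices Ã, B̃ ∈ F^{s×s} with Ã_{i,j} = 0 for all (i,j) ∈ P, B̃_{i,j} = 0 for all (i,j) ∈ Q, and Ã·B̃ = I_s (here the constraints from P only concern the top n rows of Ã, and those from Q only the left n columns of B̃). -/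
open Matrix

/-- **Padding a GCI instance to a CI instance.** With `s = n + m`, there exist
`A ∈ F^{n×s}`, `B ∈ F^{s×n}` avoiding `P`, `Q` with `A·B = I_n` iff there exist square
matrices `Ã, B̃ ∈ F^{s×s}` avoiding (the embedded copies of) `P`, `Q` with `Ã·B̃ = I_s`. -/
theorem stmt_5 (F : Type) [Field F] [Fintype F] (n m : ℕ) (hn : 1 ≤ n) (hm : 1 ≤ m)
    (P : Set (Fin n × Fin (n + m))) (Q : Set (Fin (n + m) × Fin n)) :
    (∃ (A : Matrix (Fin n) (Fin (n + m)) F) (B : Matrix (Fin (n + m)) (Fin n) F),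
        (∀ ij ∈ P, A ij.1 ij.2 = 0) ∧ (∀ ij ∈ Q, B ij.1 ij.2 = 0) ∧ A * B = 1) ↔
    (∃ At Bt : Matrix (Fin (n + m)) (Fin (n + m)) F,
        (∀ ij ∈ P, At (Fin.castLE (by omega) ij.1) ij.2 = 0) ∧
        (∀ ij ∈ Q, Bt ij.1 (Fin.castLE (by omega) ij.2) = 0) ∧ At * Bt = 1) := by
  have hle : n ≤ n + m := by omega
  constructor
  · rintro ⟨A, B, hP, hQ, hAB⟩
    -- the linear map given by A
    set f : (Fin (n + m) → F) →ₗ[F] (Fin n → F) := Matrix.mulVecLin A with hf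
    have hfsurj : Function.Surjective f := by
      intro y
      refine ⟨B.mulVec y, ?_⟩
      simp [hf, Matrix.mulVecLin_apply, Matrix.mulVec_mulVec, hAB]
    have hker : Module.finrank F (LinearMap.ker f) = m := by
      have h1 := LinearMap.finrank_range_add_finrank_ker f
      rw [LinearMap.range_eq_top.mpr hfsurj] at h1
      simp [Module.finrank_fin_fun] at h1
      omega
    -- an injective map from F^m onto ker f
    have e : (Fin m → F) ≃ₗ[F] (LinearMap.ker f) :=
      LinearEquiv.ofFinrankEq _ _ (by simp [hker, Module.finrank_fin_fun])
    set g : (Fin m → F) →ₗ[F] (Fin (n + m) → F) :=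
      (LinearMap.ker f).subtype ∘ₗ (e : (Fin m → F) →ₗ[F] LinearMap.ker f) with hg
    have hginj : Function.Injective g := by
      simpa [hg] using (Submodule.injective_subtype _).comp e.injective
    have hfg : ∀ x, f (g x) = 0 := fun x => (e x).2
    set C : Matrix (Fin (n + m)) (Fin m) F := LinearMap.toMatrix' g with hC
    have hCmul : ∀ x, C.mulVec x = g x := by
      intro x
      rw [← Matrix.toLin'_apply, hC, Matrix.toLin'_toMatrix']
    -- the padded matrix Bt
    set Bt : Matrix (Fin (n + m)) (Fin (n + m)) F :=
      Matrix.of (fun i j => Fin.addCases (fun j0 => B i j0) (fun j1 => C i j1) j) with hBt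
    have hBtL : ∀ i j, Bt i (Fin.castAdd m j) = B i j := by
      intro i j; simp [hBt]
    have hBtR : ∀ i j, Bt i (Fin.natAdd n j) = C i j := by
      intro i j; simp [hBt]
    have hBtmul : ∀ x : Fin (n + m) → F,
        Bt.mulVec x = B.mulVec (x ∘ Fin.castAdd m) + C.mulVec (x ∘ Fin.natAdd n) := by
      intro x
      funext i
      simp only [Matrix.mulVec, dotProduct, Pi.add_apply]
      rw [Fin.sum_univ_add]
      simp [hBtL, hBtR]
    -- Bt is invertible
    have hkey : ∀ x : Fin (n + m) → F, Bt.mulVec x = 0 → x = 0 := by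
      intro x hx
      rw [hBtmul] at hx
      have hx1 : x ∘ Fin.castAdd m = 0 := by
        have := congrArg (A.mulVec) hx
        rw [Matrix.mulVec_add, Matrix.mulVec_mulVec, hAB, Matrix.one_mulVec,
          hCmul, Matrix.mulVec_zero] at this
        have h0 : A.mulVec (g (x ∘ Fin.natAdd n)) = 0 := hfg _
        rw [show A.mulVec (g (x ∘ Fin.natAdd n)) = f (g (x ∘ Fin.natAdd n)) from rfl] at this
        rw [hfg] at this
        simpa using this
      have hx2 : x ∘ Fin.natAdd n = 0 := by
        rw [hx1] at hx
        rw [Matrix.mulVec_zero, zero_add, hCmul] at hx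
        exact hginj (by simpa using hx)
      funext j
      refine Fin.addCases (fun j0 => ?_) (fun j1 => ?_) j
      · exact congrFun hx1 j0
      · exact congrFun hx2 j1
    have hinj : Function.Injective Bt.mulVec := by
      intro x y hxy
      have := hkey (x - y) (by rw [Matrix.mulVec_sub, hxy, sub_self])
      exact sub_eq_zero.mp this
    have hU : IsUnit Bt := Matrix.mulVec_injective_iff_isUnit.mp hinj
    have hdet : IsUnit Bt.det := (Matrix.isUnit_iff_isUnit_det Bt).mp hU
    set At : Matrix (Fin (n + m)) (Fin (n + m)) F := Bt⁻¹ with hAt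
    have hBtAt : Bt * At = 1 := Matrix.mul_nonsing_inv Bt hdet
    have hAtBt : At * Bt = 1 := Matrix.nonsing_inv_mul Bt hdet
    -- A * C = 0
    have hAC : A * C = 0 := by
      ext i k
      have h1 : ∀ j, C j k = g (Pi.single k 1) j := by
        intro j
        have := congrFun (hCmul (Pi.single k 1)) j
        simpa [Matrix.mulVec, dotProduct, Pi.single_apply, Finset.mul_sum,
          mul_ite] using this
      have h2 : (A * C) i k = f (g (Pi.single k 1)) i := by
        simp only [Matrix.mul_apply, hf, Matrix.mulVecLin_apply, Matrix.mulVec, dotProduct]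
        exact Finset.sum_congr rfl fun j _ => by rw [h1]
      rw [h2, hfg]
      simp
    -- A * Bt = 1.submatrix castLE id
    have hABt : A * Bt = (1 : Matrix (Fin (n + m)) (Fin (n + m)) F).submatrix (Fin.castLE hle) id := by
      ext i k
      refine Fin.addCases (fun k0 => ?_) (fun k1 => ?_) k
      · have h1 : (A * Bt) i (Fin.castAdd m k0) = (A * B) i k0 := by
          simp only [Matrix.mul_apply]
          exact Finset.sum_congr rfl fun j _ => by rw [hBtL]
        rw [h1, hAB]
        simp [Matrix.one_apply, Matrix.submatrix_apply, Fin.ext_iff]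
      · have h1 : (A * Bt) i (Fin.natAdd n k1) = (A * C) i k1 := by
          simp only [Matrix.mul_apply]
          exact Finset.sum_congr rfl fun j _ => by rw [hBtR]
        rw [h1, hAC]
        have hne : (Fin.castLE hle i : Fin (n + m)) ≠ Fin.natAdd n k1 := by
          intro hcon
          have := congrArg Fin.val hcon
          simp only [Fin.coe_castLE, Fin.coe_natAdd] at this
          omega
        rw [Matrix.zero_apply, Matrix.submatrix_apply]
        exact (Matrix.one_apply_ne hne).symm
    -- the top rows of At are A
    have hrow : ∀ i j, At (Fin.castLE hle i) j = A i j := by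
      have : A = At.submatrix (Fin.castLE hle) id := by
        calc A = A * (Bt * At) := by rw [hBtAt, Matrix.mul_one]
        _ = (A * Bt) * At := by rw [Matrix.mul_assoc]
        _ = (1 : Matrix (Fin (n + m)) (Fin (n + m)) F).submatrix (Fin.castLE hle) id *
              At.submatrix id id := by rw [hABt, Matrix.submatrix_id_id]
        _ = (1 * At).submatrix (Fin.castLE hle) id :=
              (Matrix.submatrix_mul 1 At (Fin.castLE hle) id id Function.bijective_id).symm
        _ = At.submatrix (Fin.castLE hle) id := by rw [Matrix.one_mul]
      intro i j
      exact (congrFun (congrFun this i) j).symm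
    refine ⟨At, Bt, ?_, ?_, hAtBt⟩
    · intro ij hij
      rw [show (Fin.castLE (by omega) ij.1 : Fin (n + m)) = Fin.castLE hle ij.1 from rfl,
        hrow]
      exact hP ij hij
    · intro ij hij
      rw [show (Fin.castLE (by omega) ij.2 : Fin (n + m)) = Fin.castAdd m ij.2 from rfl,
        hBtL]
      exact hQ ij hij
  · rintro ⟨At, Bt, hP, hQ, h1⟩
    refine ⟨At.submatrix (Fin.castLE hle) id, Bt.submatrix id (Fin.castLE hle), ?_, ?_, ?_⟩
    · intro ij hij; exact hP ij hij
    · intro ij hij; exact hQ ij hij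
    · have := Matrix.submatrix_mul At Bt (Fin.castLE hle) id (Fin.castLE hle)
        Function.bijective_id
      rw [← this, h1]
      ext i j
      simp [Matrix.one_apply, Matrix.submatrix_apply, Fin.castLE_inj]
end

section
/- Let S and T be staircases in ℝ², let M = k_S and N = k_T, and let ε ≥ 0. If ε < d_s(S,T), then the only morphism from M to N^ε is the zero morphism. If ε ≥ d_s(S,T), then for every λ ∈ F the family of maps sending 1 ∈ M_p to λ ∈ (N^ε)_p for each p ∈ S (and zero on points outside S) is a morphism from M to N^ε. -/
structure PersMod (F : Type) [Field F] where
  space : ℝ × ℝ → Type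
  [isACG : ∀ p, AddCommGroup (space p)]
  [isMod : ∀ p, Module F (space p)]
  map : ∀ {p q : ℝ × ℝ}, p ≤ q → (space p →ₗ[F] space q)
  map_id : ∀ p : ℝ × ℝ, map (le_refl p) = LinearMap.id
  map_comp : ∀ {p q r : ℝ × ℝ} (hpq : p ≤ q) (hqr : q ≤ r),
      map hqr ∘ₗ map hpq = map (le_trans hpq hqr)

attribute [instance] PersMod.isACG PersMod.isMod

variable {F : Type} [Field F]

/-- `f` is a morphism of persistence modules `M → N`. -/
def IsHom (M N : PersMod F) (f : ∀ p, M.space p →ₗ[F] N.space p) : Prop :=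
  ∀ ⦃p q : ℝ × ℝ⦄ (h : p ≤ q), N.map h ∘ₗ f p = f q ∘ₗ M.map h

/-- `f` is a morphism of persistence modules `M → N^ε` (the `ε`-shift of `N`). -/
def IsHomShift (M N : PersMod F) (ε : ℝ)
    (f : ∀ p : ℝ × ℝ, M.space p →ₗ[F] N.space (p + (ε, ε))) : Prop :=
  ∀ ⦃p q : ℝ × ℝ⦄ (h : p ≤ q),
    N.map (add_le_add h (le_refl ((ε : ℝ), (ε : ℝ)))) ∘ₗ f p = f q ∘ₗ M.map h

/-- `(f, g)` is an `ε`-interleaving between `M` and `N`. -/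
def IsInterleaving (M N : PersMod F) (ε : ℝ)
    (f : ∀ p : ℝ × ℝ, M.space p →ₗ[F] N.space (p + (ε, ε)))
    (g : ∀ p : ℝ × ℝ, N.space p →ₗ[F] M.space (p + (ε, ε))) : Prop :=
  IsHomShift M N ε f ∧ IsHomShift N M ε g ∧
  (∀ (p : ℝ × ℝ) (h : p ≤ p + (ε, ε) + (ε, ε)), g (p + (ε, ε)) ∘ₗ f p = M.map h) ∧
  (∀ (p : ℝ × ℝ) (h : p ≤ p + (ε, ε) + (ε, ε)), f (p + (ε, ε)) ∘ₗ g p = N.map h)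

def upset (a : ℝ × ℝ) : Set (ℝ × ℝ) := {x | a ≤ x}

def IsStaircase (S : Set (ℝ × ℝ)) : Prop :=
  ∃ A : Finset (ℝ × ℝ), A.Nonempty ∧ S = ⋃ a ∈ A, upset a

def UpClosed (U : Set (ℝ × ℝ)) : Prop :=
  ∀ ⦃p q : ℝ × ℝ⦄, p ≤ q → p ∈ U → q ∈ U

theorem IsStaircase.upClosed {S : Set (ℝ × ℝ)} (hS : IsStaircase S) : UpClosed S := by
  obtain ⟨A, -, rfl⟩ := hS
  intro p q hpq hp
  simp only [Set.mem_iUnion] at hp ⊢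
  obtain ⟨a, ha, hpa⟩ := hp
  exact ⟨a, ha, le_trans hpa hpq⟩

open Classical in
/-- The fiber of the staircase module over `U` at `p` : `F` if `p ∈ U`, else `0`,
realized as a submodule of `F`. -/
noncomputable def lineAt (F : Type) [Field F] (U : Set (ℝ × ℝ)) (p : ℝ × ℝ) :
    Submodule F F :=
  if p ∈ U then ⊤ else ⊥

/-- The interval (staircase) module `k_U` of an upward closed set `U`. -/
noncomputable def stairMod (F : Type) [Field F] (U : Set (ℝ × ℝ)) (hU : UpClosed U) :
    PersMod F where
  space p := ↥(lineAt F U p)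
  map {p q} h := Submodule.inclusion (by
    by_cases hp : p ∈ U
    · simp [lineAt, hp, hU h hp]
    · simp [lineAt, hp])
  map_id p := rfl
  map_comp _ _ := rfl

/-- The element `1 ∈ F = (k_U)_p` for `p ∈ U`. -/
noncomputable def unitVec (F : Type) [Field F] (U : Set (ℝ × ℝ)) (p : ℝ × ℝ)
    (hp : p ∈ U) : ↥(lineAt F U p) :=
  ⟨1, by simp [lineAt, hp]⟩

/-- The value in `F` of an element of the fiber of `k_U` at `p`. -/
noncomputable def valAt (F : Type) [Field F] (U : Set (ℝ × ℝ)) (p : ℝ × ℝ) :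
    ↥(lineAt F U p) →ₗ[F] F :=
  (lineAt F U p).subtype

/-- Finite direct sums of persistence modules, defined pointwise. -/
noncomputable def dirSum {n : ℕ} (Ms : Fin n → PersMod F) : PersMod F where
  space p := ∀ i, (Ms i).space p
  map h := LinearMap.pi fun i => (Ms i).map h ∘ₗ LinearMap.proj i
  map_id p := by
    refine LinearMap.ext fun x => funext fun i => ?_
    simp [(Ms i).map_id]
  map_comp hpq hqr := by
    refine LinearMap.ext fun x => funext fun i => ?_
    simpa using LinearMap.congr_fun ((Ms i).map_comp hpq hqr) (x i)

/-- Direct sum of staircase modules. -/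
noncomputable def stairSum (F : Type) [Field F] {n : ℕ} (S : Fin n → Set (ℝ × ℝ))
    (hS : ∀ i, UpClosed (S i)) : PersMod F :=
  dirSum fun i => stairMod F (S i) (hS i)

/-- The `ε`-shift `S^ε = {x - (ε,ε) : x ∈ S}` of a set. -/
def shiftSet (S : Set (ℝ × ℝ)) (ε : ℝ) : Set (ℝ × ℝ) := {x | x + (ε, ε) ∈ S}

/-- The directed shift distance `d_s(S,T) = min {ε ≥ 0 : S ⊆ T^ε}`. -/
noncomputable def dirDist (S T : Set (ℝ × ℝ)) : ℝ :=
  sInf {ε : ℝ | 0 ≤ ε ∧ S ⊆ shiftSet T ε}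

/-- `M`, `N` are `ε`-interleaved. -/
def Interleaved (M N : PersMod F) (ε : ℝ) : Prop :=
  ∃ f g, IsInterleaving M N ε f g

/-- The interleaving distance. -/
noncomputable def interDist (M N : PersMod F) : ℝ :=
  sInf {ε : ℝ | 0 ≤ ε ∧ Interleaved M N ε}

/-- `S` has a finite generating set all of whose members are `≤ u`. -/
theorem upClosed_of_gens {S : Set (ℝ × ℝ)} {u : ℝ × ℝ}
    (h : ∃ A : Finset (ℝ × ℝ), A.Nonempty ∧ S = (⋃ a ∈ A, upset a) ∧ ∀ a ∈ A, a ≤ u) :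
    UpClosed S := by
  obtain ⟨A, hne, hSeq, -⟩ := h
  exact IsStaircase.upClosed ⟨A, hne, hSeq⟩

theorem mem_of_gens {S : Set (ℝ × ℝ)} {u v : ℝ × ℝ}
    (h : ∃ A : Finset (ℝ × ℝ), A.Nonempty ∧ S = (⋃ a ∈ A, upset a) ∧ ∀ a ∈ A, a ≤ u)
    (huv : u ≤ v) : v ∈ S := by
  obtain ⟨A, ⟨a, ha⟩, rfl, hle⟩ := h
  exact Set.mem_biUnion ha (le_trans (hle a ha) huv)

/-- `f : M → N^ε` has `δ`-trivial kernel: the induced map `ker f_p → ker f_{p+(δ,δ)}`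
is zero for all `p`. -/
def TrivialKerS (M N : PersMod F) (ε δ : ℝ)
    (f : ∀ p, M.space p →ₗ[F] N.space (p + (ε, ε))) : Prop :=
  ∀ (p : ℝ × ℝ) (x : M.space p), f p x = 0 → ∀ h : p ≤ p + (δ, δ), M.map h x = 0

/-- `f : M → N^ε` has `δ`-trivial cokernel: the induced map
`coker f_p → coker f_{p+(δ,δ)}` is zero for all `p`. -/
def TrivialCokerS (M N : PersMod F) (ε δ : ℝ)
    (f : ∀ p, M.space p →ₗ[F] N.space (p + (ε, ε))) : Prop :=
  ∀ (p : ℝ × ℝ) (y : N.space (p + (ε, ε))) (h : p + (ε, ε) ≤ p + (δ, δ) + (ε, ε)),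
    ∃ x : M.space (p + (δ, δ)), f (p + (δ, δ)) x = N.map h y

/-- `f : M → N` has `δ`-trivial kernel. -/
def TrivialKer (M N : PersMod F) (δ : ℝ) (f : ∀ p, M.space p →ₗ[F] N.space p) : Prop :=
  ∀ (p : ℝ × ℝ) (x : M.space p), f p x = 0 → ∀ h : p ≤ p + (δ, δ), M.map h x = 0

/-- `f : M → N` has `δ`-trivial cokernel. -/
def TrivialCoker (M N : PersMod F) (δ : ℝ) (f : ∀ p, M.space p →ₗ[F] N.space p) : Prop :=
  ∀ (p : ℝ × ℝ) (y : N.space p) (h : p ≤ p + (δ, δ)),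
    ∃ x : M.space (p + (δ, δ)), f (p + (δ, δ)) x = N.map h y

/-- The interior of an upward closed subset of `ℝ²` is upward closed. -/
theorem upClosed_interior {U : Set (ℝ × ℝ)} (hU : UpClosed U) :
    UpClosed (interior U) := by
  intro p q hpq hp
  have hsub : (fun x : ℝ × ℝ => x - (q - p)) ⁻¹' interior U ⊆ U := fun x hx =>
    hU (sub_le_self x (sub_nonneg.mpr hpq)) (interior_subset hx)
  have hopen : IsOpen ((fun x : ℝ × ℝ => x - (q - p)) ⁻¹' interior U) :=
    isOpen_interior.preimage (continuous_id.sub continuous_const)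
  have hq : q ∈ (fun x : ℝ × ℝ => x - (q - p)) ⁻¹' interior U := by
    show q - (q - p) ∈ interior U
    rwa [sub_sub_cancel]
  exact interior_maximal hsub hopen hq

/-- The dual persistence module: `(M*)_p = (M_{-p})^∨`. -/
noncomputable def dualMod (M : PersMod F) : PersMod F where
  space p := Module.Dual F (M.space (-p))
  map {p q} h := (M.map (neg_le_neg h)).dualMap
  map_id p := by
    have h : M.map (neg_le_neg (le_refl p)) = LinearMap.id := M.map_id (-p)
    ext φ x
    simp [h]
  map_comp hpq hqr := by
    ext φ x
    have h := LinearMap.congr_fun (M.map_comp (neg_le_neg hqr) (neg_le_neg hpq)) x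
    simp only [LinearMap.comp_apply, LinearMap.dualMap_apply] at h ⊢
    rw [h]

theorem IsStaircase.isClosed {S : Set (ℝ × ℝ)} (hS : IsStaircase S) : IsClosed S := by
  obtain ⟨A, -, rfl⟩ := hS
  exact Set.Finite.isClosed_biUnion A.finite_toSet fun a _ => isClosed_Ici

theorem dirDist_spec {S T : Set (ℝ × ℝ)} (hS : IsStaircase S) (hT : IsStaircase T) :
    0 ≤ dirDist S T ∧ S ⊆ shiftSet T (dirDist S T) := by
  have hmem : dirDist S T ∈ {ε : ℝ | 0 ≤ ε ∧ S ⊆ shiftSet T ε} := by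
    apply IsClosed.csInf_mem
    · -- closedness
      have heq : {ε : ℝ | 0 ≤ ε ∧ S ⊆ shiftSet T ε} =
          {ε : ℝ | 0 ≤ ε} ∩ ⋂ x ∈ S, (fun ε : ℝ => x + (ε, ε)) ⁻¹' T := by
        ext ε
        simp [shiftSet, Set.subset_def]
      rw [heq]
      exact isClosed_Ici.inter (isClosed_biInter fun x _ =>
        hT.isClosed.preimage (by fun_prop))
    · -- nonempty
      obtain ⟨A, hne, rfl, -⟩ :
          ∃ A : Finset (ℝ × ℝ), A.Nonempty ∧ S = (⋃ a ∈ A, upset a) ∧ True := by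
        obtain ⟨A, hne, rfl⟩ := hS
        exact ⟨A, hne, rfl, trivial⟩
      obtain ⟨B, ⟨b, hb⟩, rfl⟩ := hT
      set m : ℝ := A.sup' hne (fun a => max (b.1 - a.1) (b.2 - a.2)) with hm
      refine ⟨max m 0, le_max_right _ _, fun x hx => ?_⟩
      simp only [Set.mem_iUnion] at hx
      obtain ⟨a, ha, hxa⟩ := hx
      have h1 : max (b.1 - a.1) (b.2 - a.2) ≤ m :=
        Finset.le_sup' (fun a => max (b.1 - a.1) (b.2 - a.2)) ha
      have hb1 : b.1 ≤ x.1 + max m 0 := by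
        have := hxa.1
        have := le_trans (le_trans (le_max_left _ _) h1) (le_max_left m 0)
        simp only [upset, Set.mem_setOf_eq] at hxa
        linarith
      have hb2 : b.2 ≤ x.2 + max m 0 := by
        have := hxa.2
        have := le_trans (le_trans (le_max_right _ _) h1) (le_max_left m 0)
        linarith
      exact Set.mem_biUnion hb ⟨hb1, hb2⟩
    · exact ⟨0, fun x hx => hx.1⟩
  exact hmem

theorem shiftSet_mono {T : Set (ℝ × ℝ)} (hT : UpClosed T) {ε ε' : ℝ} (h : ε ≤ ε') :
    shiftSet T ε ⊆ shiftSet T ε' := fun x hx =>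
  hT (add_le_add_right (Prod.mk_le_mk.mpr ⟨h, h⟩) x) hx

theorem stairMod_map_val {U : Set (ℝ × ℝ)} (hU : UpClosed U) {p q : ℝ × ℝ} (h : p ≤ q)
    (x : (stairMod F U hU).space p) :
    valAt F U q ((stairMod F U hU).map h x) = valAt F U p x := rfl

theorem valAt_ext {U : Set (ℝ × ℝ)} (hU : UpClosed U) {p : ℝ × ℝ}
    {x y : (stairMod F U hU).space p} (h : valAt F U p x = valAt F U p y) : x = y :=
  Subtype.ext h

theorem val_eq_zero_of_not_mem {U : Set (ℝ × ℝ)} {p : ℝ × ℝ} (hp : p ∉ U)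
    (x : ↥(lineAt F U p)) : x = 0 := by
  have := x.2
  simp only [lineAt, hp, if_false, Submodule.mem_bot] at this
  exact Subtype.ext this

/-- **Morphisms `k_S → (k_T)^ε` and the directed shift distance.** If `ε < d_s(S,T)`,
the only morphism `k_S → (k_T)^ε` is zero. If `ε ≥ d_s(S,T)`, then for every `λ ∈ F`
there is a morphism of the form `1 ↦ λ` (zero outside `S`). -/
theorem stmt_7 (F : Type) [Field F] [Fintype F] (S T : Set (ℝ × ℝ))
    (hS : IsStaircase S) (hT : IsStaircase T) (ε : ℝ) (hε : 0 ≤ ε) :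
    (ε < dirDist S T →
      ∀ f, IsHomShift (stairMod F S hS.upClosed) (stairMod F T hT.upClosed) ε f →
        ∀ p : ℝ × ℝ, f p = 0) ∧
    (dirDist S T ≤ ε → ∀ lam : F,
      ∃ f, IsHomShift (stairMod F S hS.upClosed) (stairMod F T hT.upClosed) ε f ∧
        (∀ p (hp : p ∈ S), valAt F T (p + (ε, ε)) (f p (unitVec F S p hp)) = lam) ∧
        (∀ p : ℝ × ℝ, p ∉ S → f p = 0)) := by
  constructor
  · -- ε < dirDist S T : only the zero morphism
    intro hlt f hf p
    have hnotsub : ¬ S ⊆ shiftSet T ε := by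
      intro hsub
      have hbdd : BddBelow {ε : ℝ | 0 ≤ ε ∧ S ⊆ shiftSet T ε} :=
        ⟨0, fun x hx => hx.1⟩
      exact absurd (csInf_le hbdd ⟨hε, hsub⟩) (not_le.mpr hlt)
    obtain ⟨x₀, hx₀S, hx₀T⟩ :
        ∃ x₀ : ℝ × ℝ, x₀ ∈ S ∧ x₀ + ((ε : ℝ), (ε : ℝ)) ∉ T := by
      obtain ⟨x₀, hx₀S, hx₀T⟩ := Set.not_subset.mp hnotsub
      exact ⟨x₀, hx₀S, hx₀T⟩
    by_cases hp : p ∈ S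
    · by_cases hpT : p + ((ε : ℝ), (ε : ℝ)) ∈ T
      · -- the interesting case
        set q : ℝ × ℝ := (max p.1 x₀.1, max p.2 x₀.2) with hq
        have hpq : p ≤ q := Prod.le_def.mpr ⟨le_max_left _ _, le_max_left _ _⟩
        have hx₀q : x₀ ≤ q := Prod.le_def.mpr ⟨le_max_right _ _, le_max_right _ _⟩
        have hqS : q ∈ S := hS.upClosed hx₀q hx₀S
        have hqT : q + ((ε : ℝ), (ε : ℝ)) ∈ T :=
          hT.upClosed (add_le_add_left hpq _) hpT
        -- f q (unitVec q) = 0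
        have hz : f x₀ (unitVec F S x₀ hx₀S) = 0 := val_eq_zero_of_not_mem hx₀T _
        have hMq : (stairMod F S hS.upClosed).map hx₀q (unitVec F S x₀ hx₀S) =
            unitVec F S q hqS := by
          apply valAt_ext hS.upClosed
          rfl
        have h1 : f q (unitVec F S q hqS) = 0 := by
          have := LinearMap.congr_fun (hf hx₀q) (unitVec F S x₀ hx₀S)
          exact ((congrArg (f q) hMq).symm.trans this.symm).trans
            ((congrArg ((stairMod F T hT.upClosed).map (add_le_add hx₀q (le_refl ((ε : ℝ), (ε : ℝ))))) hz).trans (map_zero _))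
        -- naturality p ≤ q forces f p (unitVec p) = 0
        have hMpq : (stairMod F S hS.upClosed).map hpq (unitVec F S p hp) =
            unitVec F S q hqS := by
          apply valAt_ext hS.upClosed
          rfl
        have h2 := LinearMap.congr_fun (hf hpq) (unitVec F S p hp)
        have h2 : (stairMod F T hT.upClosed).map (add_le_add hpq (le_refl ((ε : ℝ), (ε : ℝ)))) (f p (unitVec F S p hp)) = 0 :=
          h2.trans ((congrArg (f q) hMpq).trans h1)
        have h3 : f p (unitVec F S p hp) = 0 := by
          apply valAt_ext hT.upClosed
          have h4 := congrArg (valAt F T (q + ((ε : ℝ), (ε : ℝ)))) h2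
          exact ((stairMod_map_val hT.upClosed _ _).symm.trans (h4.trans (map_zero _))).trans
            (map_zero _).symm
        -- any element is a multiple of unitVec
        refine LinearMap.ext fun x => ?_
        have hx : x = valAt F S p x • unitVec F S p hp := by
          apply valAt_ext hS.upClosed
          rw [map_smul]
          simp [valAt, unitVec]
        exact (congrArg (f p) hx).trans (((f p).map_smul (valAt F S p x) (unitVec F S p hp)).trans
          ((congrArg (fun y => valAt F S p x • y) h3).trans (smul_zero _)))
      · refine LinearMap.ext fun x => ?_
        exact val_eq_zero_of_not_mem hpT _
    · refine LinearMap.ext fun x => ?_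
      exact (congrArg (f p) (val_eq_zero_of_not_mem hp x)).trans (map_zero (f p))
  · -- dirDist S T ≤ ε : construct the morphism
    intro hle lam
    obtain ⟨-, hsub0⟩ := dirDist_spec hS hT
    have hsub : S ⊆ shiftSet T ε := fun x hx =>
      shiftSet_mono hT.upClosed hle (hsub0 hx)
    have hline : ∀ p : ℝ × ℝ, lineAt F S p ≤ lineAt F T (p + ((ε : ℝ), (ε : ℝ))) := by
      intro p
      by_cases hp : p ∈ S
      · have : p + ((ε : ℝ), (ε : ℝ)) ∈ T := hsub hp
        simp [lineAt, hp, this]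
      · simp [lineAt, hp]
    refine ⟨fun p => lam • Submodule.inclusion (hline p), ?_, ?_, ?_⟩
    · intro p q h
      rfl
    · intro p hp
      show lam • (1 : F) = lam
      rw [smul_eq_mul, mul_one]
    · intro p hp
      refine LinearMap.ext fun x => ?_
      rw [val_eq_zero_of_not_mem hp x, map_zero]
      rfl
end

section
/- Let M = ⊕_{i=1}^{n} k_{S_i} and N = ⊕_{j=1}^{n} k_{T_j} be direct sums of n staircase modules each, let ε ≥ 0, and let φ : M → N^ε and ψ : N → M^ε be morphisms. Let u ∈ ℝ² be a point with a ≤ u for every generator a of every staircase S_i and T_j, so that M_u ≅ F^n and (N^ε)_u ≅ F^n via the standard bases given by the summands. Let A ∈ F^{n×n} be the matrix of φ_u and B ∈ F^{n×n} the matrix of ψ_u with respect to these bases. Then (φ, ψ) is an ε-interleaving between M and N if and only if A·B = I_n and B·A = I_n, i.e., the matrices A and B are inverse to each other. -/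
variable {F : Type} [Field F]

open Classical

/-- Canonical element of the fiber: `1` if `p ∈ U`, else `0`. -/
noncomputable def uv (F : Type) [Field F] (U : Set (ℝ × ℝ)) (p : ℝ × ℝ) :
    ↥(lineAt F U p) :=
  ⟨if p ∈ U then 1 else 0, by unfold lineAt; split_ifs; exacts [Submodule.mem_top, Submodule.zero_mem _]⟩

theorem valAt_uv (U : Set (ℝ × ℝ)) (p : ℝ × ℝ) :
    valAt F U p (uv F U p) = if p ∈ U then 1 else 0 := rfl

theorem valAt_inj {U : Set (ℝ × ℝ)} {p : ℝ × ℝ} {x y : ↥(lineAt F U p)}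
    (h : valAt F U p x = valAt F U p y) : x = y := Subtype.ext h

theorem valAt_zero_of_not_mem {U : Set (ℝ × ℝ)} {p : ℝ × ℝ} (h : p ∉ U)
    (x : ↥(lineAt F U p)) : valAt F U p x = 0 := by
  have h2 := x.2
  simp only [lineAt, if_neg h] at h2
  exact (Submodule.mem_bot F).mp h2

theorem eq_smul_uv {U : Set (ℝ × ℝ)} {p : ℝ × ℝ} (x : ↥(lineAt F U p)) :
    x = valAt F U p x • uv F U p := by
  apply valAt_inj
  rw [map_smul, valAt_uv, smul_eq_mul]
  by_cases h : p ∈ U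
  · rw [if_pos h, mul_one]
  · rw [if_neg h, mul_zero, valAt_zero_of_not_mem h]

theorem uv_zero_of_not_mem {U : Set (ℝ × ℝ)} {p : ℝ × ℝ} (h : p ∉ U) :
    uv F U p = 0 := by
  apply valAt_inj
  rw [valAt_uv, if_neg h, map_zero]

theorem valAt_stairMap {U : Set (ℝ × ℝ)} (hU : UpClosed U) {p q : ℝ × ℝ} (h : p ≤ q)
    (x : ↥(lineAt F U p)) :
    valAt F U q ((stairMod F U hU).map h x) = valAt F U p x := rfl

theorem stairMap_uv {U : Set (ℝ × ℝ)} (hU : UpClosed U) {p q : ℝ × ℝ} (h : p ≤ q)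
    (hp : p ∈ U) : (stairMod F U hU).map h (uv F U p) = uv F U q := by
  apply valAt_inj
  rw [valAt_stairMap, valAt_uv, valAt_uv, if_pos hp, if_pos (hU h hp)]

theorem dirSum_map_apply {n : ℕ} (Ms : Fin n → PersMod F) {p q : ℝ × ℝ} (h : p ≤ q)
    (x : (dirSum Ms).space p) (i : Fin n) :
    (dirSum Ms).map h x i = (Ms i).map h (x i) := rfl

theorem dirSum_map_single {n : ℕ} (Ms : Fin n → PersMod F) {p q : ℝ × ℝ} (h : p ≤ q)
    (j : Fin n) (v : (Ms j).space p) :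
    (dirSum Ms).map h (Pi.single j v) = Pi.single j ((Ms j).map h v) := by
  funext i
  erw [dirSum_map_apply]
  rcases eq_or_ne i j with rfl | hij
  · rw [Pi.single_eq_same, Pi.single_eq_same]
  · rw [Pi.single_eq_of_ne hij, Pi.single_eq_of_ne hij, map_zero]
theorem stairSum_map_apply {n : ℕ} {S : Fin n → Set (ℝ × ℝ)} (hS : ∀ i, UpClosed (S i))
    {p q : ℝ × ℝ} (h : p ≤ q) (x : (stairSum F S hS).space p) (i : Fin n) :
    (stairSum F S hS).map h x i = (stairMod F (S i) (hS i)).map h (x i) := rfl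

theorem stairSum_map_single {n : ℕ} {S : Fin n → Set (ℝ × ℝ)} (hS : ∀ i, UpClosed (S i))
    {p q : ℝ × ℝ} (h : p ≤ q) (j : Fin n) (v : ↥(lineAt F (S j) p)) :
    (stairSum F S hS).map h (Pi.single j v)
      = Pi.single j ((stairMod F (S j) (hS j)).map h v) :=
  dirSum_map_single (fun i => stairMod F (S i) (hS i)) h j v

/-- The value of `φ p x` at coordinate `i` as a linear combination of the values of `x`. -/
theorem val_phi_apply {n : ℕ} {S T : Fin n → Set (ℝ × ℝ)} (hS : ∀ i, UpClosed (S i))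
    (hT : ∀ j, UpClosed (T j)) {ε : ℝ}
    (φ : ∀ p, (stairSum F S hS).space p →ₗ[F] (stairSum F T hT).space (p + (ε, ε)))
    (p : ℝ × ℝ) (x : (stairSum F S hS).space p) (i : Fin n) :
    valAt F (T i) (p + (ε, ε)) (φ p x i) =
      ∑ j, valAt F (S j) p (x j) *
        valAt F (T i) (p + (ε, ε)) ((φ p (Pi.single j (uv F (S j) p))) i) := by
  have hx : x = ∑ j, valAt F (S j) p (x j) •
      (Pi.single j (uv F (S j) p) : ∀ k, ↥(lineAt F (S k) p)) := by
    funext k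
    rw [Finset.sum_apply,
      Finset.sum_eq_single k
        (fun j _ hj => by rw [Pi.smul_apply, Pi.single_eq_of_ne (Ne.symm hj), smul_zero])
        (fun hk => absurd (Finset.mem_univ k) hk)]
    rw [Pi.smul_apply, Pi.single_eq_same]
    exact eq_smul_uv (x k)
  conv_lhs => rw [hx]
  erw [map_sum, Finset.sum_apply, map_sum]
  refine Finset.sum_congr rfl fun j _ => ?_
  erw [map_smul, Pi.smul_apply, map_smul, smul_eq_mul]; rfl

/-- Naturality: the coefficient of `φ` is constant along `≤` while `p ∈ S j`. -/
theorem c_const {n : ℕ} {S T : Fin n → Set (ℝ × ℝ)} (hS : ∀ i, UpClosed (S i))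
    (hT : ∀ j, UpClosed (T j)) {ε : ℝ}
    {φ : ∀ p, (stairSum F S hS).space p →ₗ[F] (stairSum F T hT).space (p + (ε, ε))}
    (hφ : IsHomShift (stairSum F S hS) (stairSum F T hT) ε φ)
    {p q : ℝ × ℝ} (h : p ≤ q) (j : Fin n) (hp : p ∈ S j) (i : Fin n) :
    valAt F (T i) (q + (ε, ε)) ((φ q (Pi.single j (uv F (S j) q))) i)
      = valAt F (T i) (p + (ε, ε)) ((φ p (Pi.single j (uv F (S j) p))) i) := by
  have hc := LinearMap.congr_fun (hφ h) (Pi.single j (uv F (S j) p))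
  simp only [LinearMap.comp_apply] at hc
  have hm : (stairSum F S hS).map h (Pi.single j (uv F (S j) p))
      = Pi.single j (uv F (S j) q) := by
    rw [stairSum_map_single, stairMap_uv (hS j) h hp]
  erw [← hm, ← hc]
  rfl

/-- The coefficient formula: the matrix coefficient of `φ` at any point `p`. -/
theorem c_formula {n : ℕ} {S T : Fin n → Set (ℝ × ℝ)} (hS : ∀ i, UpClosed (S i))
    (hT : ∀ j, UpClosed (T j)) {ε : ℝ}
    {φ : ∀ p, (stairSum F S hS).space p →ₗ[F] (stairSum F T hT).space (p + (ε, ε))}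
    (hφ : IsHomShift (stairSum F S hS) (stairSum F T hT) ε φ)
    {u : ℝ × ℝ} (hu : ∀ j, u ∈ S j) (p : ℝ × ℝ) (i j : Fin n) :
    valAt F (T i) (p + (ε, ε)) ((φ p (Pi.single j (uv F (S j) p))) i)
      = if p ∈ S j then
          valAt F (T i) (u + (ε, ε)) ((φ u (Pi.single j (uv F (S j) u))) i)
        else 0 := by
  by_cases hp : p ∈ S j
  · rw [if_pos hp, ← c_const hS hT hφ (le_sup_left : p ≤ p ⊔ u) j hp i,
      c_const hS hT hφ (le_sup_right : u ≤ p ⊔ u) j (hu j) i]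
  · erw [if_neg hp, uv_zero_of_not_mem hp, Pi.single_zero, map_zero]
    show valAt F (T i) (p + (ε, ε)) 0 = 0
    rw [map_zero]
/-- If the pointwise matrices of `φ` and `ψ` come from globally inverse matrices,
the composite `ψ ∘ φ` equals the structure map. -/
theorem comp_eq_map {n : ℕ} {S T : Fin n → Set (ℝ × ℝ)} (hS : ∀ i, UpClosed (S i))
    (hT : ∀ j, UpClosed (T j)) {ε : ℝ}
    (φ : ∀ p, (stairSum F S hS).space p →ₗ[F] (stairSum F T hT).space (p + (ε, ε)))
    (ψ : ∀ p, (stairSum F T hT).space p →ₗ[F] (stairSum F S hS).space (p + (ε, ε)))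
    (A B : Matrix (Fin n) (Fin n) F)
    (hcA : ∀ (p : ℝ × ℝ) (i j : Fin n),
      valAt F (T i) (p + (ε, ε)) ((φ p (Pi.single j (uv F (S j) p))) i)
        = if p ∈ S j then A i j else 0)
    (hcB : ∀ (q : ℝ × ℝ) (j i : Fin n),
      valAt F (S j) (q + (ε, ε)) ((ψ q (Pi.single i (uv F (T i) q))) j)
        = if q ∈ T i then B j i else 0)
    (hBA : B * A = 1)
    (p : ℝ × ℝ) (h : p ≤ p + (ε, ε) + (ε, ε)) :
    ψ (p + (ε, ε)) ∘ₗ φ p = (stairSum F S hS).map h := by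
  apply LinearMap.ext
  intro x
  funext j'
  apply valAt_inj
  erw [LinearMap.comp_apply, stairSum_map_apply hS h, valAt_stairMap (hS j') h,
    val_phi_apply hT hS ψ (p + (ε, ε)) (φ p x) j']
  have hterm : ∀ i j : Fin n,
      valAt F (S j) p (x j) *
          valAt F (T i) (p + (ε, ε)) ((φ p (Pi.single j (uv F (S j) p))) i) *
          valAt F (S j') (p + (ε, ε) + (ε, ε))
            ((ψ (p + (ε, ε)) (Pi.single i (uv F (T i) (p + (ε, ε))))) j')
        = valAt F (S j) p (x j) * (B j' i * A i j) := by
    intro i j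
    by_cases hpj : p ∈ S j
    · rw [hcA p i j, if_pos hpj, hcB (p + (ε, ε)) j' i]
      by_cases hti : p + (ε, ε) ∈ T i
      · rw [if_pos hti]; ring
      · rw [if_neg hti]
        have hA0 : A i j = 0 := by
          have h2 := hcA p i j
          rw [if_pos hpj] at h2
          rw [← h2]
          exact valAt_zero_of_not_mem hti _
        rw [hA0]; ring
    · erw [valAt_zero_of_not_mem hpj, zero_mul, zero_mul, zero_mul]
  calc
    ∑ i, valAt F (T i) (p + (ε, ε)) ((φ p x) i) *
        valAt F (S j') (p + (ε, ε) + (ε, ε))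
          ((ψ (p + (ε, ε)) (Pi.single i (uv F (T i) (p + (ε, ε))))) j')
      = ∑ i, ∑ j, valAt F (S j) p (x j) * (B j' i * A i j) := by
        refine Finset.sum_congr rfl fun i _ => ?_
        rw [val_phi_apply hS hT φ p x i, Finset.sum_mul]
        exact Finset.sum_congr rfl fun j _ => hterm i j
    _ = ∑ j, valAt F (S j) p (x j) * ∑ i, B j' i * A i j := by
        rw [Finset.sum_comm]
        exact Finset.sum_congr rfl fun j _ => by rw [Finset.mul_sum]
    _ = ∑ j, valAt F (S j) p (x j) * (if j' = j then 1 else 0) := by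
        refine Finset.sum_congr rfl fun j _ => ?_
        rw [← Matrix.mul_apply, hBA, Matrix.one_apply]
    _ = valAt F (S j') p (x j') := by
        simp [mul_ite, Finset.sum_ite_eq]
/-- If the composite `ψ ∘ φ` at `u` equals the structure map, the matrices multiply to `1`. -/
theorem inv_of_comp {n : ℕ} {S T : Fin n → Set (ℝ × ℝ)} (hS : ∀ i, UpClosed (S i))
    (hT : ∀ j, UpClosed (T j)) {ε : ℝ}
    (φ : ∀ p, (stairSum F S hS).space p →ₗ[F] (stairSum F T hT).space (p + (ε, ε)))
    (ψ : ∀ p, (stairSum F T hT).space p →ₗ[F] (stairSum F S hS).space (p + (ε, ε)))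
    (A B : Matrix (Fin n) (Fin n) F)
    (hcA : ∀ (p : ℝ × ℝ) (i j : Fin n),
      valAt F (T i) (p + (ε, ε)) ((φ p (Pi.single j (uv F (S j) p))) i)
        = if p ∈ S j then A i j else 0)
    (hcB : ∀ (q : ℝ × ℝ) (j i : Fin n),
      valAt F (S j) (q + (ε, ε)) ((ψ q (Pi.single i (uv F (T i) q))) j)
        = if q ∈ T i then B j i else 0)
    (u : ℝ × ℝ) (huS : ∀ j, u ∈ S j) (hueT : ∀ i, u + (ε, ε) ∈ T i)
    (hueeS : ∀ j, u + (ε, ε) + (ε, ε) ∈ S j)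
    (h2 : u ≤ u + (ε, ε) + (ε, ε))
    (hcomp : ψ (u + (ε, ε)) ∘ₗ φ u = (stairSum F S hS).map h2) :
    B * A = 1 := by
  ext j' j
  have hc := LinearMap.congr_fun hcomp (Pi.single j (uv F (S j) u))
  simp only [LinearMap.comp_apply] at hc
  have hv := congrArg (fun z => valAt F (S j') (u + (ε, ε) + (ε, ε)) (z j')) hc
  erw [LinearMap.comp_apply, val_phi_apply hT hS ψ (u + (ε, ε)) (φ u (Pi.single j (uv F (S j) u))) j',
    stairSum_map_single, stairMap_uv (hS j) h2 (huS j)] at hv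
  have hL : ∀ i : Fin n,
      valAt F (T i) (u + (ε, ε)) ((φ u (Pi.single j (uv F (S j) u))) i) *
        valAt F (S j') (u + (ε, ε) + (ε, ε))
          ((ψ (u + (ε, ε)) (Pi.single i (uv F (T i) (u + (ε, ε))))) j')
      = B j' i * A i j := by
    intro i
    rw [hcA u i j, if_pos (huS j), hcB (u + (ε, ε)) j' i, if_pos (hueT i), mul_comm]
  rw [Finset.sum_congr rfl fun i _ => hL i] at hv
  rw [Matrix.mul_apply, Matrix.one_apply, hv]
  rcases eq_or_ne j' j with rfl | hne
  · erw [Pi.single_eq_same, valAt_uv, if_pos (hueeS j'), if_pos rfl]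
  · erw [Pi.single_eq_of_ne hne, map_zero, if_neg hne]
/-- **Interleavings of sums of staircase modules correspond to inverse matrices.**
Let `M`, `N` be direct sums of `n` staircase modules, all of whose generators are `≤ u`,
let `φ : M → N^ε`, `ψ : N → M^ε` be morphisms, and let `Amat`, `Bmat` be the matrices of
`φ_u`, `ψ_u` with respect to the standard bases. Then `(φ, ψ)` is an `ε`-interleaving iff
`Amat` and `Bmat` are mutually inverse. -/
theorem stmt_9 (F : Type) [Field F] [Fintype F] (n : ℕ) (hn : 1 ≤ n)
    (S T : Fin n → Set (ℝ × ℝ)) (u : ℝ × ℝ) (ε : ℝ) (hε : 0 ≤ ε)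
    (hgS : ∀ i, ∃ A : Finset (ℝ × ℝ),
      A.Nonempty ∧ S i = (⋃ a ∈ A, upset a) ∧ ∀ a ∈ A, a ≤ u)
    (hgT : ∀ j, ∃ A : Finset (ℝ × ℝ),
      A.Nonempty ∧ T j = (⋃ a ∈ A, upset a) ∧ ∀ a ∈ A, a ≤ u)
    (φ : ∀ p, (stairSum F S fun i => upClosed_of_gens (hgS i)).space p →ₗ[F]
              (stairSum F T fun j => upClosed_of_gens (hgT j)).space (p + (ε, ε)))
    (ψ : ∀ p, (stairSum F T fun j => upClosed_of_gens (hgT j)).space p →ₗ[F]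
              (stairSum F S fun i => upClosed_of_gens (hgS i)).space (p + (ε, ε)))
    (hφ : IsHomShift (stairSum F S fun i => upClosed_of_gens (hgS i))
            (stairSum F T fun j => upClosed_of_gens (hgT j)) ε φ)
    (hψ : IsHomShift (stairSum F T fun j => upClosed_of_gens (hgT j))
            (stairSum F S fun i => upClosed_of_gens (hgS i)) ε ψ)
    (Amat Bmat : Matrix (Fin n) (Fin n) F)
    (hA : ∀ i j : Fin n, Amat i j = valAt F (T i) (u + (ε, ε))
        ((φ u (Pi.single j (unitVec F (S j) u (mem_of_gens (hgS j) le_rfl)))) i))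
    (hB : ∀ j i : Fin n, Bmat j i = valAt F (S j) (u + (ε, ε))
        ((ψ u (Pi.single i (unitVec F (T i) u (mem_of_gens (hgT i) le_rfl)))) j)) :
    IsInterleaving (stairSum F S fun i => upClosed_of_gens (hgS i))
        (stairSum F T fun j => upClosed_of_gens (hgT j)) ε φ ψ ↔
      (Amat * Bmat = 1 ∧ Bmat * Amat = 1) := by
  have h0 : ∀ q : ℝ × ℝ, q ≤ q + (ε, ε) :=
    fun q => le_add_of_nonneg_right (Prod.mk_le_mk.mpr ⟨hε, hε⟩)
  have huS : ∀ j, u ∈ S j := fun j => mem_of_gens (hgS j) le_rfl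
  have huT : ∀ i, u ∈ T i := fun i => mem_of_gens (hgT i) le_rfl
  have h2 : u ≤ u + (ε, ε) + (ε, ε) := le_trans (h0 u) (h0 _)
  have hueS : ∀ j, u + (ε, ε) ∈ S j := fun j => mem_of_gens (hgS j) (h0 u)
  have hueT : ∀ i, u + (ε, ε) ∈ T i := fun i => mem_of_gens (hgT i) (h0 u)
  have hueeS : ∀ j, u + (ε, ε) + (ε, ε) ∈ S j := fun j => mem_of_gens (hgS j) h2
  have hueeT : ∀ i, u + (ε, ε) + (ε, ε) ∈ T i := fun i => mem_of_gens (hgT i) h2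
  have hAc : ∀ i j, valAt F (T i) (u + (ε, ε))
      ((φ u (Pi.single j (uv F (S j) u))) i) = Amat i j := by
    intro i j
    rw [hA i j, show unitVec F (S j) u (mem_of_gens (hgS j) le_rfl) = uv F (S j) u from
      Subtype.ext (by show (1 : F) = if u ∈ S j then 1 else 0; rw [if_pos (huS j)])]
  have hBc : ∀ j i, valAt F (S j) (u + (ε, ε))
      ((ψ u (Pi.single i (uv F (T i) u))) j) = Bmat j i := by
    intro j i
    rw [hB j i, show unitVec F (T i) u (mem_of_gens (hgT i) le_rfl) = uv F (T i) u from
      Subtype.ext (by show (1 : F) = if u ∈ T i then 1 else 0; rw [if_pos (huT i)])]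
  have hcA : ∀ (p : ℝ × ℝ) (i j : Fin n),
      valAt F (T i) (p + (ε, ε)) ((φ p (Pi.single j (uv F (S j) p))) i)
        = if p ∈ S j then Amat i j else 0 := by
    intro p i j
    rw [c_formula _ _ hφ huS p i j, hAc i j]
  have hcB : ∀ (q : ℝ × ℝ) (j i : Fin n),
      valAt F (S j) (q + (ε, ε)) ((ψ q (Pi.single i (uv F (T i) q))) j)
        = if q ∈ T i then Bmat j i else 0 := by
    intro q j i
    rw [c_formula _ _ hψ huT q j i, hBc j i]
  constructor
  · rintro ⟨-, -, hgf, hfg⟩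
    exact ⟨inv_of_comp _ _ ψ φ Bmat Amat hcB hcA u huT hueS hueeT h2 (hfg u h2),
           inv_of_comp _ _ φ ψ Amat Bmat hcA hcB u huS hueT hueeS h2 (hgf u h2)⟩
  · rintro ⟨hAB, hBA⟩
    exact ⟨hφ, hψ, fun p h => comp_eq_map _ _ φ ψ Amat Bmat hcA hcB hBA p h,
           fun p h => comp_eq_map _ _ ψ φ Bmat Amat hcB hcA hAB p h⟩
end

section
/- Let F be a finite field, n ≥ 1, and P, Q ⊆ [n]×[n]. Suppose S_1,…,S_n and T_1,…,T_n are staircases in ℝ² satisfying: d_s(S_i, T_j) = 3 if (i,j) ∈ P and d_s(S_i, T_j) = 1 if (i,j) ∉ P, and d_s(T_j, S_i) = 3 if (j,i) ∈ Q and d_s(T_j, S_i) = 1 if (j,i) ∉ Q, for all i, j ∈ [n]. Let M = ⊕_{i=1}^{n} k_{S_i} and N = ⊕_{j=1}^{n} k_{T_j}. If the CI instance (n,P,Q) is solvable, then M and N are 1-interleaved but not ε-interleaved for any ε < 1, so d_I(M,N) = 1. If the CI instance (n,P,Q) is not solvable, then M and N are 3-interleaved but not ε-interleaved for any ε < 3,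 so d_I(M,N) = 3. -/
variable {F : Type} [Field F]

/-- The CI instance `(n, P, Q)` is solvable over `F`. -/
def CISolvable (F : Type) [Field F] (n : ℕ) (P Q : Set (Fin n × Fin n)) : Prop :=
  ∃ A B : Matrix (Fin n) (Fin n) F,
    (∀ ij ∈ P, A ij.1 ij.2 = 0) ∧ (∀ ij ∈ Q, B ij.1 ij.2 = 0) ∧ A * B = 1
section AuxHelpers

lemma lineAt_eq_top {U : Set (ℝ × ℝ)} {p : ℝ × ℝ} (h : p ∈ U) :
    lineAt F U p = ⊤ := if_pos h

lemma lineAt_eq_bot {U : Set (ℝ × ℝ)} {p : ℝ × ℝ} (h : p ∉ U) :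
    lineAt F U p = ⊥ := if_neg h

/-- The value in `F` of a fiber element. -/
def vl {U : Set (ℝ × ℝ)} {p : ℝ × ℝ} (x : ↥(lineAt F U p)) : F := x.val

lemma vl_ext {U : Set (ℝ × ℝ)} {p : ℝ × ℝ} {x y : ↥(lineAt F U p)}
    (h : vl x = vl y) : x = y := Subtype.ext h

lemma vl_zero {U : Set (ℝ × ℝ)} {p : ℝ × ℝ} : vl (0 : ↥(lineAt F U p)) = 0 := rfl

lemma vl_add {U : Set (ℝ × ℝ)} {p : ℝ × ℝ} (x y : ↥(lineAt F U p)) :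
    vl (x + y) = vl x + vl y := rfl

lemma vl_smul {U : Set (ℝ × ℝ)} {p : ℝ × ℝ} (c : F) (x : ↥(lineAt F U p)) :
    vl (c • x) = c * vl x := rfl

lemma vl_sum {U : Set (ℝ × ℝ)} {p : ℝ × ℝ} {ι : Type*} (s : Finset ι)
    (f : ι → ↥(lineAt F U p)) : vl (∑ i ∈ s, f i) = ∑ i ∈ s, vl (f i) := by
  classical
  induction s using Finset.induction with
  | empty => simp [vl_zero]
  | insert _ _ hni ih => rw [Finset.sum_insert hni, Finset.sum_insert hni, vl_add, ih]

lemma vl_eq_zero_of_not_mem {U : Set (ℝ × ℝ)} {p : ℝ × ℝ} (h : p ∉ U)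
    (x : ↥(lineAt F U p)) : vl x = 0 := by
  obtain ⟨v, hv⟩ := x
  rw [lineAt_eq_bot h] at hv
  simpa [vl] using hv

open Classical in
noncomputable def toFib (F : Type) [Field F] (V : Set (ℝ × ℝ)) (q : ℝ × ℝ) :
    F →ₗ[F] ↥(lineAt F V q) :=
  if h : q ∈ V then
    { toFun := fun c => ⟨c, by simp [lineAt_eq_top h]⟩
      map_add' := fun a b => rfl
      map_smul' := fun a b => rfl }
  else 0

open Classical in
lemma toFib_val (V : Set (ℝ × ℝ)) (q : ℝ × ℝ) (c : F) :
    vl (toFib F V q c) = if q ∈ V then c else 0 := by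
  unfold toFib
  by_cases h : q ∈ V
  · rw [dif_pos h, if_pos h]; rfl
  · rw [dif_neg h, if_neg h]; rfl

lemma pair_le_add {p : ℝ × ℝ} {ε : ℝ} (hε : 0 ≤ ε) : p ≤ p + (ε, ε) := by
  rw [Prod.le_def]
  constructor <;> simp [hε]

section Fam

variable {n : ℕ} {S T : Fin n → Set (ℝ × ℝ)}

/-- basis vector `e_i` in the direct sum fiber -/
noncomputable def bas (S : Fin n → Set (ℝ × ℝ)) (p : ℝ × ℝ) (i : Fin n) (hp : p ∈ S i) :
    ∀ k, ↥(lineAt F (S k) p) :=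
  Pi.single i (unitVec F (S i) p hp)

lemma bas_val (p : ℝ × ℝ) (i : Fin n) (hp : p ∈ S i) (k : Fin n) :
    vl (bas (F := F) S p i hp k) = if k = i then 1 else 0 := by
  rcases eq_or_ne k i with rfl | h
  · simp [bas, vl, unitVec]
  · simp [bas, Pi.single_eq_of_ne h, h, vl_zero]

lemma stairSum_map_val {hS : ∀ i, UpClosed (S i)} {p q : ℝ × ℝ} (h : p ≤ q)
    (x : (stairSum F S hS).space p) (k : Fin n) :
    vl (((stairSum F S hS).map h x) k) = vl (x k) := rfl

lemma vext {p : ℝ × ℝ} {x y : ∀ k, ↥(lineAt F (S k) p)}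
    (h : ∀ k, vl (x k) = vl (y k)) : x = y :=
  funext fun k => Subtype.ext (h k)

end Fam
end AuxHelpers
section CoreLemmas
variable {n : ℕ} {S T : Fin n → Set (ℝ × ℝ)}
  {hS : ∀ i, UpClosed (S i)} {hT : ∀ j, UpClosed (T j)}

/-- Kill lemma: if the canonical generator dies before reaching `T j`, the `j`-component
of its image under a hom-shift is zero at any larger point. -/
lemma kill {ε : ℝ}
    {f : ∀ p : ℝ × ℝ, (stairSum F S hS).space p →ₗ[F] (stairSum F T hT).space (p + (ε, ε))}
    (hf : IsHomShift (stairSum F S hS) (stairSum F T hT) ε f)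
    {i j : Fin n} {p0 q : ℝ × ℝ} (h0q : p0 ≤ q) (hp0 : p0 ∈ S i) (hq : q ∈ S i)
    (hnot : p0 + (ε, ε) ∉ T j) :
    vl (f q (bas S q i hq) j) = 0 := by
  have hb : (stairSum F S hS).map h0q (bas S p0 i hp0) = bas S q i hq := by
    apply vext
    intro k
    exact (bas_val p0 i hp0 k).trans (bas_val q i hq k).symm
  have hcomm := LinearMap.congr_fun (hf h0q) (bas S p0 i hp0)
  exact (congrArg (fun z => vl (f q z j)) hb.symm).trans
    (((congrArg (fun (z : (stairSum F T hT).space (q + (ε, ε))) => vl (z j)) hcomm.symm).trans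
      (stairSum_map_val (add_le_add h0q (le_refl ((ε : ℝ), (ε : ℝ)))) (f p0 (bas S p0 i hp0)) j)).trans (vl_eq_zero_of_not_mem hnot _))

lemma decomp {p : ℝ × ℝ} (hp : ∀ j, p ∈ T j) (y : ∀ k, ↥(lineAt F (T k) p)) :
    y = ∑ j, vl (y j) • bas T p j (hp j) := by
  apply vext
  intro k
  rw [Finset.sum_apply]
  rw [vl_sum]
  have : ∀ j, vl ((vl (y j) • bas T p j (hp j)) k) = vl (y j) * (if k = j then 1 else 0) := by
    intro j
    rw [Pi.smul_apply, vl_smul, bas_val]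
  simp only [this, mul_ite, mul_one, mul_zero]
  rw [Finset.sum_ite_eq]
  simp

lemma key_comp {ε : ℝ} (hε : 0 ≤ ε)
    {f : ∀ p : ℝ × ℝ, (stairSum F S hS).space p →ₗ[F] (stairSum F T hT).space (p + (ε, ε))}
    {g : ∀ p : ℝ × ℝ, (stairSum F T hT).space p →ₗ[F] (stairSum F S hS).space (p + (ε, ε))}
    (hgf : ∀ (p : ℝ × ℝ) (h : p ≤ p + (ε, ε) + (ε, ε)),
        g (p + (ε, ε)) ∘ₗ f p = (stairSum F S hS).map h)
    {p : ℝ × ℝ} (hpS : ∀ i, p ∈ S i) (hpT : ∀ j, p + (ε, ε) ∈ T j) (i i' : Fin n) :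
    ∑ j, vl (f p (bas S p i (hpS i)) j) *
        vl (g (p + (ε, ε)) (bas T (p + (ε, ε)) j (hpT j)) i') = if i = i' then 1 else 0 := by
  have h2 : p ≤ p + (ε, ε) + (ε, ε) := le_trans (pair_le_add hε) (pair_le_add hε)
  have hcomp := congrArg (fun φ => φ (bas S p i (hpS i))) (hgf p h2)
  change g (p + (ε, ε)) (f p (bas S p i (hpS i))) = _ at hcomp
  set y := f p (bas S p i (hpS i)) with hy
  rw [decomp hpT y] at hcomp
  replace hcomp := (map_sum (g (p + (ε, ε)))
    (fun j => vl (y j) • bas T (p + (ε, ε)) j (hpT j)) Finset.univ).symm.trans hcomp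
  have hval : ∑ j, vl (g (p + (ε, ε)) (vl (y j) • bas T (p + (ε, ε)) j (hpT j)) i')
      = vl ((stairSum F S hS).map h2 (bas S p i (hpS i)) i') := by
    refine (vl_sum _ _).symm.trans ?_
    refine Eq.trans ?_
      (congrArg (fun (z : (stairSum F S hS).space (p + (ε, ε) + (ε, ε))) => vl (z i')) hcomp)
    exact congrArg vl (Finset.sum_apply i' _ _).symm
  have hterm : ∀ j, vl ((g (p + (ε, ε)) (vl (y j) • bas T (p + (ε, ε)) j (hpT j))) i')
      = vl (y j) * vl (g (p + (ε, ε)) (bas T (p + (ε, ε)) j (hpT j)) i') := by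
    intro j
    exact (congrArg (fun (z : (stairSum F S hS).space (p + (ε, ε) + (ε, ε))) => vl (z i'))
      (map_smul (g (p + (ε, ε))) (vl (y j)) (bas T (p + (ε, ε)) j (hpT j)))).trans (vl_smul _ _)
  calc ∑ j, vl (y j) * vl (g (p + (ε, ε)) (bas T (p + (ε, ε)) j (hpT j)) i')
      = ∑ j, vl (g (p + (ε, ε)) (vl (y j) • bas T (p + (ε, ε)) j (hpT j)) i') :=
        Finset.sum_congr rfl fun j _ => (hterm j).symm
    _ = vl ((stairSum F S hS).map h2 (bas S p i (hpS i)) i') := hval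
    _ = if i = i' then 1 else 0 := (bas_val p i (hpS i) i').trans (by simp [eq_comm])

/-- The morphism `⊕ k_{S i} → (⊕ k_{T j})^ε` determined by the matrix `A`. -/
noncomputable def buildF (S T : Fin n → Set (ℝ × ℝ)) (ε : ℝ) (A : Matrix (Fin n) (Fin n) F)
    (p : ℝ × ℝ) :
    (∀ k, ↥(lineAt F (S k) p)) →ₗ[F] (∀ j, ↥(lineAt F (T j) (p + (ε, ε)))) :=
  LinearMap.pi fun j => toFib F (T j) (p + (ε, ε)) ∘ₗ
    (∑ i, A i j • ((lineAt F (S i) p).subtype ∘ₗ LinearMap.proj i))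

lemma buildF_val {ε : ℝ} {A : Matrix (Fin n) (Fin n) F}
    (hA : ∀ i j, A i j ≠ 0 → S i ⊆ shiftSet (T j) ε) (p : ℝ × ℝ)
    (x : ∀ k, ↥(lineAt F (S k) p)) (j : Fin n) :
    vl (buildF S T ε A p x j) = ∑ i, A i j * vl (x i) := by
  have h1 : buildF S T ε A p x j
      = toFib F (T j) (p + (ε, ε)) (∑ i, A i j * vl (x i)) := by
    unfold buildF
    rw [LinearMap.pi_apply, LinearMap.comp_apply]
    congr 1
    rw [LinearMap.sum_apply]
    refine Finset.sum_congr rfl fun i _ => ?_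
    rfl
  rw [h1, toFib_val]
  by_cases h : p + (ε, ε) ∈ T j
  · rw [if_pos h]
  · rw [if_neg h]
    symm
    refine Finset.sum_eq_zero fun i _ => ?_
    by_cases hA0 : A i j = 0
    · rw [hA0, zero_mul]
    · by_cases hp : p ∈ S i
      · exact absurd (hA i j hA0 hp) h
      · rw [vl_eq_zero_of_not_mem hp, mul_zero]

lemma buildF_hom {ε : ℝ} {A : Matrix (Fin n) (Fin n) F}
    (hA : ∀ i j, A i j ≠ 0 → S i ⊆ shiftSet (T j) ε) :
    IsHomShift (stairSum F S hS) (stairSum F T hT) ε (buildF S T ε A) := by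
  intro p q h
  apply LinearMap.ext
  intro x
  apply vext
  intro j
  change vl ((stairSum F T hT).map (add_le_add h (le_refl ((ε : ℝ), (ε : ℝ)))) (buildF S T ε A p x) j) = vl (buildF S T ε A q ((stairSum F S hS).map h x) j)
  have e1 : vl ((buildF S T ε A p) x j) = ∑ i, A i j * vl (x i) := buildF_val hA p x j
  have e2 : vl ((buildF S T ε A q) ((stairSum F S hS).map h x) j)
      = ∑ i, A i j * vl ((stairSum F S hS).map h x i) :=
    buildF_val hA q ((stairSum F S hS).map h x) j
  refine Eq.trans ?_ (e1.trans ((Finset.sum_congr rfl fun i _ => ?_).trans e2.symm))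
  · exact stairSum_map_val _ _ _
  · rw [stairSum_map_val]

lemma buildF_comp {ε : ℝ} {A B : Matrix (Fin n) (Fin n) F}
    (hA : ∀ i j, A i j ≠ 0 → S i ⊆ shiftSet (T j) ε)
    (hB : ∀ j i, B j i ≠ 0 → T j ⊆ shiftSet (S i) ε)
    (hAB : ∀ i i', ∑ j, A i j * B j i' = if i = i' then 1 else 0)
    (p : ℝ × ℝ) (h : p ≤ p + (ε, ε) + (ε, ε)) :
    buildF T S ε B (p + (ε, ε)) ∘ₗ buildF S T ε A p = (stairSum F S hS).map h := by
  apply LinearMap.ext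
  intro x
  apply vext
  intro i'
  simp only [LinearMap.comp_apply]
  have e1 : vl ((buildF T S ε B (p + (ε, ε))) ((buildF S T ε A p) x) i')
      = ∑ j, B j i' * vl ((buildF S T ε A p) x j) :=
    buildF_val hB (p + (ε, ε)) ((buildF S T ε A p) x) i'
  refine e1.trans (Eq.trans ?_ (stairSum_map_val h x i').symm)
  calc ∑ j, B j i' * vl (buildF S T ε A p x j)
      = ∑ j, ∑ i, A i j * vl (x i) * B j i' := by
        refine Finset.sum_congr rfl fun j _ => ?_
        rw [buildF_val hA, Finset.mul_sum]
        refine Finset.sum_congr rfl fun i _ => by ring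
    _ = ∑ i, (∑ j, A i j * B j i') * vl (x i) := by
        rw [Finset.sum_comm]
        refine Finset.sum_congr rfl fun i _ => ?_
        rw [Finset.sum_mul]
        refine Finset.sum_congr rfl fun j _ => by ring
    _ = vl (x i') := by
        simp only [hAB, ite_mul, one_mul, zero_mul]
        rw [Finset.sum_ite_eq']
        simp

lemma build_interleaved {ε : ℝ} (A B : Matrix (Fin n) (Fin n) F)
    (hA : ∀ i j, A i j ≠ 0 → S i ⊆ shiftSet (T j) ε)
    (hB : ∀ j i, B j i ≠ 0 → T j ⊆ shiftSet (S i) ε)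
    (hAB : A * B = 1) :
    Interleaved (stairSum F S hS) (stairSum F T hT) ε := by
  have hBA : B * A = 1 := mul_eq_one_comm.mp hAB
  have hAB' : ∀ i i', ∑ j, A i j * B j i' = if i = i' then 1 else 0 := by
    intro i i'
    have := congrFun (congrFun hAB i) i'
    simpa [Matrix.mul_apply, Matrix.one_apply] using this
  have hBA' : ∀ j j', ∑ i, B j i * A i j' = if j = j' then 1 else 0 := by
    intro j j'
    have := congrFun (congrFun hBA j) j'
    simpa [Matrix.mul_apply, Matrix.one_apply] using this
  exact ⟨buildF S T ε A, buildF T S ε B, buildF_hom hA, buildF_hom hB,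
    fun p h => buildF_comp hA hB hAB' p h, fun p h => buildF_comp hB hA hBA' p h⟩

end CoreLemmas
section DistLemmas

lemma staircase_exists_base {S : Set (ℝ × ℝ)} (hS : IsStaircase S) :
    ∃ a, upset a ⊆ S := by
  obtain ⟨A, ⟨a, ha⟩, rfl⟩ := hS
  exact ⟨a, fun x hx => Set.mem_biUnion ha hx⟩

lemma staircase_exists_cover {S T : Set (ℝ × ℝ)} (hS : IsStaircase S) (hT : IsStaircase T) :
    ∃ ε : ℝ, 0 ≤ ε ∧ S ⊆ shiftSet T ε := by
  obtain ⟨b, hb⟩ := staircase_exists_base hT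
  obtain ⟨A, hA, rfl⟩ := hS
  refine ⟨max 0 (A.sup' hA fun a => max (b.1 - a.1) (b.2 - a.2)), le_max_left _ _, ?_⟩
  intro x hx
  simp only [Set.mem_iUnion] at hx
  obtain ⟨a, ha, hax⟩ := hx
  apply hb
  have h1 : b.1 - a.1 ≤ A.sup' hA fun a => max (b.1 - a.1) (b.2 - a.2) :=
    le_trans (le_max_left _ _) (Finset.le_sup' (fun a => max (b.1 - a.1) (b.2 - a.2)) ha)
  have h2 : b.2 - a.2 ≤ A.sup' hA fun a => max (b.1 - a.1) (b.2 - a.2) :=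
    le_trans (le_max_right _ _) (Finset.le_sup' (fun a => max (b.1 - a.1) (b.2 - a.2)) ha)
  have hm : (A.sup' hA fun a => max (b.1 - a.1) (b.2 - a.2)) ≤
      max 0 (A.sup' hA fun a => max (b.1 - a.1) (b.2 - a.2)) := le_max_right _ _
  have hax1 : a.1 ≤ x.1 := hax.1
  have hax2 : a.2 ≤ x.2 := hax.2
  constructor
  · simp only [Prod.fst_add]
    linarith
  · simp only [Prod.snd_add]
    linarith

lemma dirDist_attained {S T : Set (ℝ × ℝ)} (hS : IsStaircase S) (hT : IsStaircase T)
    {c : ℝ} (_hc : 0 ≤ c) (hd : dirDist S T ≤ c) : S ⊆ shiftSet T c := by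
  obtain ⟨A, hAne, hTeq⟩ := hT
  have hne : {ε : ℝ | 0 ≤ ε ∧ S ⊆ shiftSet T ε}.Nonempty := by
    obtain ⟨ε, h0, hsub⟩ := staircase_exists_cover hS ⟨A, hAne, hTeq⟩
    exact ⟨ε, h0, hsub⟩
  intro x hx
  by_contra hxc
  have hxc' : x + (c, c) ∉ T := hxc
  have hgap : ∀ a ∈ A, 0 < max (a.1 - (x.1 + c)) (a.2 - (x.2 + c)) := by
    intro a ha
    by_contra hle
    push_neg at hle
    apply hxc'
    rw [hTeq]
    refine Set.mem_biUnion ha ?_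
    have h1 : a.1 - (x.1 + c) ≤ 0 := le_trans (le_max_left _ _) hle
    have h2 : a.2 - (x.2 + c) ≤ 0 := le_trans (le_max_right _ _) hle
    constructor
    · simp only [Prod.fst_add]; linarith
    · simp only [Prod.snd_add]; linarith
  set δ := A.inf' hAne fun a => max (a.1 - (x.1 + c)) (a.2 - (x.2 + c)) with hδ
  have hδpos : 0 < δ := (Finset.lt_inf'_iff hAne).mpr hgap
  have hlt : dirDist S T < c + δ := lt_of_le_of_lt hd (by linarith)
  have hsinf : ∃ ε ∈ {ε : ℝ | 0 ≤ ε ∧ S ⊆ shiftSet T ε}, ε < c + δ :=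
    (csInf_lt_iff ⟨0, fun y hy => hy.1⟩ hne).mp hlt
  obtain ⟨ε, ⟨hε0, hεsub⟩, hεlt⟩ := hsinf
  have hxT : x + (ε, ε) ∈ T := hεsub hx
  rw [hTeq] at hxT
  simp only [Set.mem_iUnion] at hxT
  obtain ⟨a, ha, hax⟩ := hxT
  have h1 : a.1 ≤ x.1 + ε := by simpa using hax.1
  have h2 : a.2 ≤ x.2 + ε := by simpa using hax.2
  have hδa : δ ≤ max (a.1 - (x.1 + c)) (a.2 - (x.2 + c)) := Finset.inf'_le _ ha
  have : max (a.1 - (x.1 + c)) (a.2 - (x.2 + c)) < δ := by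
    apply max_lt <;> linarith
  linarith

lemma not_subset_of_lt {S T : Set (ℝ × ℝ)} {d ε : ℝ} (hd : dirDist S T = d)
    (hε0 : 0 ≤ ε) (hεd : ε < d) : ¬ S ⊆ shiftSet T ε := by
  intro hsub
  have : dirDist S T ≤ ε := csInf_le ⟨0, fun y hy => hy.1⟩ ⟨hε0, hsub⟩
  rw [hd] at this
  linarith

end DistLemmas
section Extract

lemma extract_CI {n : ℕ} (hn : 1 ≤ n) {S T : Fin n → Set (ℝ × ℝ)}
    (hS : ∀ i, IsStaircase (S i)) (hT : ∀ j, IsStaircase (T j))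
    {ε : ℝ} (hε : 0 ≤ ε) (P' Q' : Set (Fin n × Fin n))
    (hwA : ∀ i j, (i, j) ∈ P' → ¬ S i ⊆ shiftSet (T j) ε)
    (hwB : ∀ j i, (j, i) ∈ Q' → ¬ T j ⊆ shiftSet (S i) ε)
    (hint : Interleaved (stairSum F S fun i => (hS i).upClosed)
        (stairSum F T fun j => (hT j).upClosed) ε) :
    CISolvable F n P' Q' := by
  classical
  haveI : Nonempty (Fin n) := ⟨⟨0, hn⟩⟩
  obtain ⟨f, g, hf, hg, hgf, hfg⟩ := hint
  choose a ha using fun i => staircase_exists_base (hS i)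
  choose b hb using fun j => staircase_exists_base (hT j)
  have hexA : ∀ i j : Fin n, ∃ p : ℝ × ℝ,
      (i, j) ∈ P' → p ∈ S i ∧ p + (ε, ε) ∉ T j := by
    intro i j
    by_cases h : (i, j) ∈ P'
    · obtain ⟨x, hx1, hx2⟩ := Set.not_subset.mp (hwA i j h)
      exact ⟨x, fun _ => ⟨hx1, hx2⟩⟩
    · exact ⟨a i, fun h' => absurd h' h⟩
  have hexB : ∀ j i : Fin n, ∃ q : ℝ × ℝ,
      (j, i) ∈ Q' → q ∈ T j ∧ q + (ε, ε) ∉ S i := by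
    intro j i
    by_cases h : (j, i) ∈ Q'
    · obtain ⟨x, hx1, hx2⟩ := Set.not_subset.mp (hwB j i h)
      exact ⟨x, fun _ => ⟨hx1, hx2⟩⟩
    · exact ⟨b j, fun h' => absurd h' h⟩
  choose wA hwAs using hexA
  choose wB hwBs using hexB
  set base : ℝ × ℝ := Finset.univ.sup' Finset.univ_nonempty (fun k : Fin n => a k ⊔ b k)
    with hbase
  set fpair : Fin n × Fin n → ℝ × ℝ :=
    fun ij => base ⊔ wA ij.1 ij.2 ⊔ (wB ij.1 ij.2 - (ε, ε)) with hfpair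
  set pstar : ℝ × ℝ := Finset.univ.sup' Finset.univ_nonempty fpair with hpstar
  have hfp_le : ∀ ij : Fin n × Fin n, fpair ij ≤ pstar :=
    fun ij => Finset.le_sup' fpair (Finset.mem_univ ij)
  have hbase_le : base ≤ pstar :=
    le_trans (le_trans le_sup_left le_sup_left)
      (hfp_le ((⟨0, hn⟩ : Fin n), (⟨0, hn⟩ : Fin n)))
  have hwA_le : ∀ i j, wA i j ≤ pstar := fun i j =>
    le_trans (le_trans le_sup_right le_sup_left) (hfp_le (i, j))
  have hwB_le : ∀ j i, wB j i ≤ pstar + (ε, ε) := by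
    intro j i
    have h1 : wB j i - (ε, ε) ≤ pstar :=
      le_trans le_sup_right (hfp_le (j, i))
    have := add_le_add_left h1 ((ε : ℝ), (ε : ℝ))
    simpa using this
  have ha_le : ∀ i, a i ≤ pstar := fun i =>
    le_trans (le_trans le_sup_left (Finset.le_sup' (fun k : Fin n => a k ⊔ b k)
      (Finset.mem_univ i) : a i ⊔ b i ≤ base)) hbase_le
  have hb_le : ∀ j, b j ≤ pstar := fun j =>
    le_trans (le_trans le_sup_right (Finset.le_sup' (fun k : Fin n => a k ⊔ b k)
      (Finset.mem_univ j) : a j ⊔ b j ≤ base)) hbase_le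
  have hpS : ∀ i, pstar ∈ S i := fun i => ha i (ha_le i)
  have hpT : ∀ j, pstar + (ε, ε) ∈ T j := fun j =>
    hb j (le_trans (hb_le j) (pair_le_add hε))
  refine ⟨(fun i j => vl (f pstar (bas S pstar i (hpS i)) j)),
      (fun j i => vl (g (pstar + (ε, ε)) (bas T (pstar + (ε, ε)) j (hpT j)) i)),
      ?_, ?_, ?_⟩
  · rintro ⟨i, j⟩ hij
    obtain ⟨hw1, hw2⟩ := hwAs i j hij
    exact kill hf (hwA_le i j) hw1 (hpS i) hw2
  · rintro ⟨j, i⟩ hji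
    obtain ⟨hw1, hw2⟩ := hwBs j i hji
    exact kill hg (hwB_le j i) hw1 (hpT j) hw2
  · ext i i'
    exact Matrix.mul_apply.trans ((key_comp hε hgf hpS hpT i i').trans Matrix.one_apply.symm)

end Extract

/-- **CI solvability determines the interleaving distance.** If staircases realize the
prescribed directed shift distances (3 on `P`/`Q`, 1 otherwise), then the direct sums
`M = ⊕ k_{S_i}`, `N = ⊕ k_{T_j}` satisfy: `d_I(M,N) = 1` (with 1-interleaving attained,
and no `ε`-interleaving for `ε < 1`) if the CI instance is solvable, and `d_I(M,N) = 3`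
(with 3-interleaving attained, and none for `ε < 3`) otherwise. -/
theorem stmt_10 (F : Type) [Field F] [Fintype F] (n : ℕ) (hn : 1 ≤ n)
    (P Q : Set (Fin n × Fin n)) (S T : Fin n → Set (ℝ × ℝ))
    (hS : ∀ i, IsStaircase (S i)) (hT : ∀ j, IsStaircase (T j))
    (hST : ∀ i j, ((i, j) ∈ P → dirDist (S i) (T j) = 3) ∧
                  ((i, j) ∉ P → dirDist (S i) (T j) = 1))
    (hTS : ∀ i j, ((j, i) ∈ Q → dirDist (T j) (S i) = 3) ∧
                  ((j, i) ∉ Q → dirDist (T j) (S i) = 1)) :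
    (CISolvable F n P Q →
      Interleaved (stairSum F S fun i => (hS i).upClosed)
          (stairSum F T fun j => (hT j).upClosed) 1 ∧
      (∀ ε : ℝ, 0 ≤ ε → ε < 1 →
        ¬ Interleaved (stairSum F S fun i => (hS i).upClosed)
            (stairSum F T fun j => (hT j).upClosed) ε) ∧
      interDist (stairSum F S fun i => (hS i).upClosed)
          (stairSum F T fun j => (hT j).upClosed) = 1) ∧
    (¬ CISolvable F n P Q →
      Interleaved (stairSum F S fun i => (hS i).upClosed)
          (stairSum F T fun j => (hT j).upClosed) 3 ∧
      (∀ ε : ℝ, 0 ≤ ε → ε < 3 →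
        ¬ Interleaved (stairSum F S fun i => (hS i).upClosed)
            (stairSum F T fun j => (hT j).upClosed) ε) ∧
      interDist (stairSum F S fun i => (hS i).upClosed)
          (stairSum F T fun j => (hT j).upClosed) = 3) := by
  classical
  haveI hnE : Nonempty (Fin n) := ⟨⟨0, hn⟩⟩
  have hd3S : ∀ i j, S i ⊆ shiftSet (T j) 3 := by
    intro i j
    rcases em ((i, j) ∈ P) with h | h
    · exact dirDist_attained (hS i) (hT j) (by norm_num) (le_of_eq ((hST i j).1 h))
    · exact dirDist_attained (hS i) (hT j) (by norm_num) (by rw [(hST i j).2 h]; norm_num)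
  have hd3T : ∀ j i, T j ⊆ shiftSet (S i) 3 := by
    intro j i
    rcases em ((j, i) ∈ Q) with h | h
    · exact dirDist_attained (hT j) (hS i) (by norm_num) (le_of_eq ((hTS i j).1 h))
    · exact dirDist_attained (hT j) (hS i) (by norm_num) (by rw [(hTS i j).2 h]; norm_num)
  constructor
  · intro hsol
    obtain ⟨A, B, hAP, hBQ, hAB⟩ := hsol
    have h1 : Interleaved (stairSum F S fun i => (hS i).upClosed)
        (stairSum F T fun j => (hT j).upClosed) 1 := by
      refine build_interleaved A B ?_ ?_ hAB
      · intro i j hne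
        by_cases hp : (i, j) ∈ P
        · exact absurd (hAP (i, j) hp) hne
        · exact dirDist_attained (hS i) (hT j) zero_le_one
            (le_of_eq ((hST i j).2 hp))
      · intro j i hne
        by_cases hq : (j, i) ∈ Q
        · exact absurd (hBQ (j, i) hq) hne
        · exact dirDist_attained (hT j) (hS i) zero_le_one
            (le_of_eq ((hTS i j).2 hq))
    have hlow : ∀ ε : ℝ, 0 ≤ ε → ε < 1 →
        ¬ Interleaved (stairSum F S fun i => (hS i).upClosed)
          (stairSum F T fun j => (hT j).upClosed) ε := by
      intro ε hε0 hε1 hint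
      have hci := extract_CI hn hS hT hε0 Set.univ ∅
        (fun i j _ => by
          rcases em ((i, j) ∈ P) with h | h
          · exact not_subset_of_lt ((hST i j).1 h) hε0 (by linarith)
          · exact not_subset_of_lt ((hST i j).2 h) hε0 (by linarith))
        (fun j i h => absurd h (Set.notMem_empty _)) hint
      obtain ⟨A', B', hA0, -, hAB'⟩ := hci
      have hentry : (A' * B') ⟨0, hn⟩ ⟨0, hn⟩ = 1 := by
        rw [hAB', Matrix.one_apply_eq]
      rw [Matrix.mul_apply] at hentry
      have hz : ∀ j, A' ⟨0, hn⟩ j = 0 := fun j => hA0 (⟨0, hn⟩, j) trivial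
      simp only [hz, zero_mul, Finset.sum_const_zero] at hentry
      exact zero_ne_one hentry
    refine ⟨h1, hlow, ?_⟩
    apply le_antisymm
    · exact csInf_le ⟨0, fun y hy => hy.1⟩ ⟨zero_le_one, h1⟩
    · refine le_csInf ⟨1, zero_le_one, h1⟩ ?_
      rintro ε ⟨hε0, hεint⟩
      by_contra hlt
      push_neg at hlt
      exact hlow ε hε0 hlt hεint
  · intro hnsol
    have h3 : Interleaved (stairSum F S fun i => (hS i).upClosed)
        (stairSum F T fun j => (hT j).upClosed) 3 := by
      refine build_interleaved 1 1 ?_ ?_ (by simp)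
      · exact fun i j _ => hd3S i j
      · exact fun j i _ => hd3T j i
    have hlow : ∀ ε : ℝ, 0 ≤ ε → ε < 3 →
        ¬ Interleaved (stairSum F S fun i => (hS i).upClosed)
          (stairSum F T fun j => (hT j).upClosed) ε := by
      intro ε hε0 hε3 hint
      exact hnsol (extract_CI hn hS hT hε0 P Q
        (fun i j hij => not_subset_of_lt ((hST i j).1 hij) hε0 hε3)
        (fun j i hji => not_subset_of_lt ((hTS i j).1 hji) hε0 hε3) hint)
    refine ⟨h3, hlow, ?_⟩
    apply le_antisymm
    · exact csInf_le ⟨0, fun y hy => hy.1⟩ ⟨by norm_num, h3⟩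
    · refine le_csInf ⟨3, by norm_num, h3⟩ ?_
      rintro ε ⟨hε0, hεint⟩
      by_contra hlt
      push_neg at hlt
      exact hlow ε hε0 hlt hεint
end

section
/- For every n ≥ 1 and all sets P, Q ⊆ [n]×[n], there exist staircases S_1,…,S_n and T_1,…,T_n in ℝ², each a union of at most 4n²+1 sets of the form ⟨a⟩, such that for all i, j ∈ [n]: d_s(S_i, T_j) = 3 if reading (i,j) ∈ P and d_s(S_i, T_j) = 1 otherwise; and d_s(T_j, S_i) = 3 if (j,i) ∈ Q and d_s(T_j, S_i) = 1 otherwise. -/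
variable {F : Type} [Field F]

/-! ### Auxiliary construction for `stmt_11` -/

lemma aux_mul_add_inj {n k k' l l' : ℕ} (hl : l < n) (hl' : l' < n)
    (h : k * n + l = k' * n + l') : k = k' ∧ l = l' := by
  have hn : 0 < n := Nat.pos_of_ne_zero (by rintro rfl; exact Nat.not_lt_zero _ hl)
  have e1 : l = l' := by
    have h2 := congrArg (· % n) h
    rwa [Nat.mul_comm k n, Nat.mul_comm k' n, Nat.mul_add_mod, Nat.mul_add_mod,
      Nat.mod_eq_of_lt hl, Nat.mod_eq_of_lt hl'] at h2
  subst e1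
  have e2 : k * n = k' * n := by
    have := Nat.add_right_cancel h
    exact this
  exact ⟨Nat.eq_of_mul_eq_mul_right hn e2, rfl⟩

lemma aux_lt_sq {n k l : ℕ} (hk : k < n) (hl : l < n) : k * n + l < n * n := by
  have h1 : k * n + l < (k + 1) * n := by
    have : (k + 1) * n = k * n + n := by ring
    rw [this]
    exact Nat.add_lt_add_left hl _
  have h2 : (k + 1) * n ≤ n * n := Nat.mul_le_mul_right n hk
  exact lt_of_lt_of_le h1 h2

/-- Index of a gadget position: `false`-gadgets handle the `S → T` direction,
`true`-gadgets the `T → S` direction. -/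
def gposIdx (n : ℕ) (x : Bool × Fin n × Fin n) : ℕ :=
  (cond x.1 (n * n) 0) + (x.2.1 : ℕ) * n + (x.2.2 : ℕ)

lemma gposIdx_inj (n : ℕ) : Function.Injective (gposIdx n) := by
  rintro ⟨b, k, l⟩ ⟨b', k', l'⟩ h
  have hkl := aux_lt_sq k.isLt l.isLt
  have hkl' := aux_lt_sq k'.isLt l'.isLt
  cases b <;> cases b' <;>
    simp only [gposIdx, cond_true, cond_false, Nat.zero_add] at h
  · obtain ⟨h1, h2⟩ := aux_mul_add_inj l.isLt l'.isLt h
    simp [Prod.ext_iff, Fin.ext_iff, h1, h2]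
  · exact absurd h (Nat.ne_of_lt (by linarith [Nat.zero_le ((k' : ℕ) * n + (l' : ℕ))]))
  · exact absurd h (Nat.ne_of_gt (by linarith [Nat.zero_le ((k : ℕ) * n + (l : ℕ))]))
  · have h' : (k : ℕ) * n + (l : ℕ) = (k' : ℕ) * n + (l' : ℕ) := by linarith
    obtain ⟨h1, h2⟩ := aux_mul_add_inj l.isLt l'.isLt h'
    simp [Prod.ext_iff, Fin.ext_iff, h1, h2]

open Classical in
/-- The prescribed distance value: `3` on the relation, `1` off it. -/
noncomputable def pvR {n : ℕ} (P : Set (Fin n × Fin n)) (k l : Fin n) : ℝ :=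
  if (k, l) ∈ P then 3 else 1

lemma pvR_mem {n : ℕ} (P : Set (Fin n × Fin n)) (k l : Fin n) :
    1 ≤ pvR P k l ∧ pvR P k l ≤ 3 := by
  unfold pvR; split <;> norm_num

/-- Height of the generator of `S i` at gadget `x`. -/
noncomputable def hgtS {n : ℕ} (P Q : Set (Fin n × Fin n)) (i : Fin n)
    (x : Bool × Fin n × Fin n) : ℝ :=
  cond x.1 (if i = x.2.2 then pvR Q x.2.1 x.2.2 else pvR Q x.2.1 x.2.2 - 2)
    (if i = x.2.1 then 0 else pvR P x.2.1 x.2.2 - 1)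

/-- Height of the generator of `T j` at gadget `x`. -/
noncomputable def hgtT {n : ℕ} (P Q : Set (Fin n × Fin n)) (j : Fin n)
    (x : Bool × Fin n × Fin n) : ℝ :=
  cond x.1 (if j = x.2.1 then 0 else pvR Q x.2.1 x.2.2 - 1)
    (if j = x.2.2 then pvR P x.2.1 x.2.2 else pvR P x.2.1 x.2.2 - 2)

lemma hgtS_bounds {n : ℕ} (P Q : Set (Fin n × Fin n)) (i : Fin n)
    (x : Bool × Fin n × Fin n) : -1 ≤ hgtS P Q i x ∧ hgtS P Q i x ≤ 3 := by
  obtain ⟨b, k, l⟩ := x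
  obtain ⟨ha, hb⟩ := pvR_mem P k l
  obtain ⟨hc, hd⟩ := pvR_mem Q k l
  cases b <;> simp only [hgtS, cond_true, cond_false] <;> split_ifs <;>
    constructor <;> linarith

lemma hgtT_bounds {n : ℕ} (P Q : Set (Fin n × Fin n)) (j : Fin n)
    (x : Bool × Fin n × Fin n) : -1 ≤ hgtT P Q j x ∧ hgtT P Q j x ≤ 3 := by
  obtain ⟨b, k, l⟩ := x
  obtain ⟨ha, hb⟩ := pvR_mem P k l
  obtain ⟨hc, hd⟩ := pvR_mem Q k l
  cases b <;> simp only [hgtT, cond_true, cond_false] <;> split_ifs <;>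
    constructor <;> linarith

lemma hub_ST {n : ℕ} (P Q : Set (Fin n × Fin n)) (i j : Fin n)
    (x : Bool × Fin n × Fin n) : hgtT P Q j x ≤ hgtS P Q i x + pvR P i j := by
  obtain ⟨b, k, l⟩ := x
  obtain ⟨ha, hb⟩ := pvR_mem P k l
  obtain ⟨hc, hd⟩ := pvR_mem Q k l
  obtain ⟨he, hf⟩ := pvR_mem P i j
  cases b <;> simp only [hgtS, hgtT, cond_true, cond_false] <;> split_ifs <;>
    first
      | linarith
      | (subst_vars; linarith)

lemma hub_TS {n : ℕ} (P Q : Set (Fin n × Fin n)) (i j : Fin n)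
    (x : Bool × Fin n × Fin n) : hgtS P Q i x ≤ hgtT P Q j x + pvR Q j i := by
  obtain ⟨b, k, l⟩ := x
  obtain ⟨ha, hb⟩ := pvR_mem P k l
  obtain ⟨hc, hd⟩ := pvR_mem Q k l
  obtain ⟨he, hf⟩ := pvR_mem Q j i
  cases b <;> simp only [hgtS, hgtT, cond_true, cond_false] <;> split_ifs <;>
    first
      | linarith
      | (subst_vars; linarith)

/-- The generator point at gadget `x` with height `h`. -/
noncomputable def gpt (n : ℕ) (x : Bool × Fin n × Fin n) (h : ℝ) : ℝ × ℝ :=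
  (100 * (gposIdx n x : ℝ) + h, -(100 * (gposIdx n x : ℝ)) + h)

lemma dirDist_eq_of {ι : Type*} (f g : ι → ℝ × ℝ) (c : ℝ) (hc : 0 ≤ c)
    (hub : ∀ i, g i ≤ f i + (c, c)) (i0 : ι)
    (hlb : ∀ i, c ≤ max ((g i).1 - (f i0).1) ((g i).2 - (f i0).2)) :
    dirDist (⋃ i, upset (f i)) (⋃ i, upset (g i)) = c := by
  have hleast : IsLeast
      {ε : ℝ | 0 ≤ ε ∧ (⋃ i, upset (f i)) ⊆ shiftSet (⋃ i, upset (g i)) ε} c := by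
    constructor
    · refine ⟨hc, fun x hx => ?_⟩
      simp only [Set.mem_iUnion] at hx
      obtain ⟨i, hi⟩ := hx
      have hi' : f i ≤ x := hi
      show x + (c, c) ∈ ⋃ i, upset (g i)
      exact Set.mem_iUnion.2
        ⟨i, show g i ≤ x + (c, c) from le_trans (hub i) (add_le_add hi' le_rfl)⟩
    · rintro ε ⟨hε0, hsub⟩
      have hx : f i0 ∈ ⋃ i, upset (f i) :=
        Set.mem_iUnion.2 ⟨i0, le_refl (f i0)⟩
      have hmem := hsub hx
      simp only [shiftSet, Set.mem_setOf_eq, Set.mem_iUnion] at hmem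
      obtain ⟨i, hi⟩ := hmem
      have hi' : g i ≤ f i0 + (ε, ε) := hi
      rw [Prod.le_def] at hi'
      have h1 : (g i).1 ≤ (f i0).1 + ε := by
        have := hi'.1; simpa using this
      have h2 : (g i).2 ≤ (f i0).2 + ε := by
        have := hi'.2; simpa using this
      rcases le_max_iff.1 (hlb i) with h | h <;> linarith
  exact hleast.csInf_eq

lemma dirDist_gen {n : ℕ} (hf hg : (Bool × Fin n × Fin n) → ℝ) (c : ℝ)
    (hc1 : 1 ≤ c) (hc3 : c ≤ 3)
    (hgb : ∀ x, -1 ≤ hg x ∧ hg x ≤ 3)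
    (hub : ∀ x, hg x ≤ hf x + c)
    (x0 : Bool × Fin n × Fin n) (hf0 : hf x0 = 0) (hg0 : hg x0 = c) :
    dirDist (⋃ x, upset (gpt n x (hf x))) (⋃ x, upset (gpt n x (hg x))) = c := by
  refine dirDist_eq_of (fun x => gpt n x (hf x)) (fun x => gpt n x (hg x)) c
    (by linarith) ?_ x0 ?_
  · intro x
    simp only [gpt, Prod.mk_add_mk, Prod.mk_le_mk]
    constructor <;> linarith [hub x]
  · intro x
    by_cases hx : x = x0
    · subst hx
      apply le_max_iff.2
      left
      simp only [gpt, hf0, hg0]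
      linarith
    · have hne : gposIdx n x ≠ gposIdx n x0 := fun h => hx (gposIdx_inj n h)
      obtain ⟨hg1, hg2⟩ := hgb x
      rcases hne.lt_or_gt with h | h
      · have hcast : (gposIdx n x : ℝ) + 1 ≤ (gposIdx n x0 : ℝ) := by
          exact_mod_cast Nat.succ_le_of_lt h
        apply le_max_iff.2
        right
        simp only [gpt, hf0]
        linarith
      · have hcast : (gposIdx n x0 : ℝ) + 1 ≤ (gposIdx n x : ℝ) := by
          exact_mod_cast Nat.succ_le_of_lt h
        apply le_max_iff.2
        left
        simp only [gpt, hf0]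
        linarith

/-- **Construction of the staircases.** For every `n ≥ 1` and `P, Q ⊆ [n]×[n]` there are
staircases `S_1,…,S_n`, `T_1,…,T_n`, each generated by at most `4n²+1` points, realizing
directed shift distance `3` on `P` (resp. `Q`) and `1` otherwise. -/
theorem stmt_11 (n : ℕ) (hn : 1 ≤ n) (P Q : Set (Fin n × Fin n)) :
    ∃ S T : Fin n → Set (ℝ × ℝ),
      (∀ i, ∃ A : Finset (ℝ × ℝ),
        A.Nonempty ∧ A.card ≤ 4*n^2+1 ∧ S i = ⋃ a ∈ A, upset a) ∧
      (∀ j, ∃ A : Finset (ℝ × ℝ),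
        A.Nonempty ∧ A.card ≤ 4*n^2+1 ∧ T j = ⋃ a ∈ A, upset a) ∧
      (∀ i j, ((i, j) ∈ P → dirDist (S i) (T j) = 3) ∧
              ((i, j) ∉ P → dirDist (S i) (T j) = 1) ∧
              ((j, i) ∈ Q → dirDist (T j) (S i) = 3) ∧
              ((j, i) ∉ Q → dirDist (T j) (S i) = 1)) := by
  classical
  have hNe : Nonempty (Bool × Fin n × Fin n) :=
    ⟨(false, ⟨0, hn⟩, ⟨0, hn⟩)⟩
  refine ⟨fun i => ⋃ x, upset (gpt n x (hgtS P Q i x)),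
          fun j => ⋃ x, upset (gpt n x (hgtT P Q j x)), ?_, ?_, ?_⟩
  · intro i
    refine ⟨Finset.univ.image (fun x => gpt n x (hgtS P Q i x)),
      Finset.Nonempty.image Finset.univ_nonempty _, ?_, ?_⟩
    · calc (Finset.univ.image (fun x => gpt n x (hgtS P Q i x))).card
          ≤ (Finset.univ : Finset (Bool × Fin n × Fin n)).card :=
            Finset.card_image_le
        _ = 2 * (n * n) := by simp [Fintype.card_prod]
        _ ≤ 4 * n ^ 2 + 1 := by rw [pow_two]; linarith [Nat.zero_le (n * n)]
    · ext p
      simp only [Set.mem_iUnion, Finset.mem_coe, Finset.mem_image,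
        Finset.mem_univ, true_and]
      constructor
      · rintro ⟨x, hx⟩
        exact ⟨_, ⟨x, rfl⟩, hx⟩
      · rintro ⟨a, ⟨x, rfl⟩, hx⟩
        exact ⟨x, hx⟩
  · intro j
    refine ⟨Finset.univ.image (fun x => gpt n x (hgtT P Q j x)),
      Finset.Nonempty.image Finset.univ_nonempty _, ?_, ?_⟩
    · calc (Finset.univ.image (fun x => gpt n x (hgtT P Q j x))).card
          ≤ (Finset.univ : Finset (Bool × Fin n × Fin n)).card :=
            Finset.card_image_le
        _ = 2 * (n * n) := by simp [Fintype.card_prod]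
        _ ≤ 4 * n ^ 2 + 1 := by rw [pow_two]; linarith [Nat.zero_le (n * n)]
    · ext p
      simp only [Set.mem_iUnion, Finset.mem_coe, Finset.mem_image,
        Finset.mem_univ, true_and]
      constructor
      · rintro ⟨x, hx⟩
        exact ⟨_, ⟨x, rfl⟩, hx⟩
      · rintro ⟨a, ⟨x, rfl⟩, hx⟩
        exact ⟨x, hx⟩
  · intro i j
    have hm1 : dirDist (⋃ x, upset (gpt n x (hgtS P Q i x)))
        (⋃ x, upset (gpt n x (hgtT P Q j x))) = pvR P i j := by
      refine dirDist_gen _ _ _ (pvR_mem P i j).1 (pvR_mem P i j).2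
        (fun x => hgtT_bounds P Q j x) (fun x => hub_ST P Q i j x)
        (false, i, j) ?_ ?_
      · simp [hgtS]
      · simp [hgtT]
    have hm2 : dirDist (⋃ x, upset (gpt n x (hgtT P Q j x)))
        (⋃ x, upset (gpt n x (hgtS P Q i x))) = pvR Q j i := by
      refine dirDist_gen _ _ _ (pvR_mem Q j i).1 (pvR_mem Q j i).2
        (fun x => hgtS_bounds P Q i x) (fun x => hub_TS P Q i j x)
        (true, j, i) ?_ ?_
      · simp [hgtT]
      · simp [hgtS]
    refine ⟨fun h => ?_, fun h => ?_, fun h => ?_, fun h => ?_⟩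
    · rw [hm1]; simp [pvR, h]
    · rw [hm1]; simp [pvR, h]
    · rw [hm2]; simp [pvR, h]
    · rw [hm2]; simp [pvR, h]
end

section
/- Let M and N be persistence modules over ℝ² and ε ≥ 0. If f : M → N^ε is injective (i.e., every f_p is injective) and has 2ε-trivial cokernel, then there exists a morphism g : N → M^ε such that f and g form an ε-interleaving. -/
variable {F : Type} [Field F]

private theorem cast_map_aux (N : PersMod F) {a b b' : ℝ × ℝ} (hb : b = b')
    (e : N.space b = N.space b') (h : a ≤ b) (h' : a ≤ b') (y : N.space a) :
    cast e (N.map h y) = N.map h' y := by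
  subst hb; rfl

private theorem f_cast_aux (M N : PersMod F) (ε : ℝ)
    (f : ∀ p, M.space p →ₗ[F] N.space (p + (ε, ε)))
    {a b : ℝ × ℝ} (hab : a = b) (x : M.space a) :
    f b (cast (congrArg M.space hab) x)
      = cast (congrArg (fun t => N.space (t + (ε, ε))) hab) (f a x) := by
  subst hab; rfl

/-- **Injective morphisms with `2ε`-trivial cokernel give interleavings.** If
`f : M → N^ε` is an injective morphism with `2ε`-trivial cokernel, then there is a
morphism `g : N → M^ε` such that `(f, g)` is an `ε`-interleaving. -/
theorem stmt_13 (F : Type) [Field F] [Fintype F] (M N : PersMod F) (ε : ℝ) (hε : 0 ≤ ε)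
    (f : ∀ p, M.space p →ₗ[F] N.space (p + (ε, ε)))
    (hf : IsHomShift M N ε f)
    (hinj : ∀ p : ℝ × ℝ, Function.Injective (f p))
    (hcok : TrivialCokerS M N ε (2*ε) f) :
    ∃ g, IsInterleaving M N ε f g := by
  have hle2 : ∀ q : ℝ × ℝ, q ≤ q + (ε, ε) + (ε, ε) := by
    intro q
    constructor <;> simp <;> linarith
  -- existence of preimages one shift up
  have hex : ∀ (p : ℝ × ℝ) (y : N.space p),
      ∃ x : M.space (p + (ε, ε)), f (p + (ε, ε)) x = N.map (hle2 p) y := by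
    intro p y
    obtain ⟨q, rfl⟩ : ∃ q, p = q + (ε, ε) := ⟨p - (ε, ε), by ring⟩
    have h' : q + (ε, ε) ≤ q + (2 * ε, 2 * ε) + (ε, ε) := by
      constructor <;> simp <;> linarith
    obtain ⟨x, hx⟩ := hcok q y h'
    have e : q + (2 * ε, 2 * ε) = q + (ε, ε) + (ε, ε) := by
      have : ((2 * ε, 2 * ε) : ℝ × ℝ) = (ε, ε) + (ε, ε) := by
        simp [Prod.ext_iff]; ring
      rw [this, add_assoc]
    refine ⟨cast (congrArg M.space e) x, ?_⟩
    rw [f_cast_aux M N ε f e x, hx]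
    exact cast_map_aux N (by rw [e]) _ h' (hle2 (q + (ε, ε))) y
  choose G hG using hex
  -- G is linear
  have hadd : ∀ (p : ℝ × ℝ) (y z : N.space p), G p (y + z) = G p y + G p z := by
    intro p y z
    apply hinj (p + (ε, ε))
    rw [hG, map_add, map_add, hG, hG]
  have hsmul : ∀ (p : ℝ × ℝ) (c : F) (y : N.space p), G p (c • y) = c • G p y := by
    intro p c y
    apply hinj (p + (ε, ε))
    rw [hG, map_smul, map_smul, hG]
  refine ⟨fun p => ⟨⟨G p, hadd p⟩, hsmul p⟩, hf, ?_, ?_, ?_⟩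
  · -- g is a hom shift
    intro p q h
    ext y
    apply hinj (q + (ε, ε))
    simp only [LinearMap.comp_apply, LinearMap.coe_mk, AddHom.coe_mk]
    rw [hG]
    have h1 : p + (ε, ε) ≤ q + (ε, ε) := add_le_add h le_rfl
    have step : (f (q + (ε, ε))) ((M.map (add_le_add h (le_refl ((ε : ℝ), (ε : ℝ))))) (G p y))
        = N.map (add_le_add h1 (le_refl ((ε : ℝ), (ε : ℝ)))) ((f (p + (ε, ε))) (G p y)) :=
      (LinearMap.congr_fun (hf h1) (G p y)).symm
    rw [step, hG]
    have e1 := LinearMap.congr_fun (N.map_comp (hle2 p) (add_le_add h1 (le_refl ((ε : ℝ), (ε : ℝ))))) y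
    have e2 := LinearMap.congr_fun (N.map_comp h (hle2 q)) y
    simp only [LinearMap.comp_apply] at e1 e2
    rw [e1, e2]
  · -- g ∘ f = shift of M
    intro p h
    ext x
    simp only [LinearMap.comp_apply, LinearMap.coe_mk, AddHom.coe_mk]
    apply hinj (p + (ε, ε) + (ε, ε))
    rw [hG]
    have := LinearMap.congr_fun (hf h) x
    simp only [LinearMap.comp_apply] at this
    rw [← this]
  · -- f ∘ g = shift of N
    intro p h
    ext y
    simp only [LinearMap.comp_apply, LinearMap.coe_mk, AddHom.coe_mk]
    rw [hG]
end

section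
/- Let M and N be persistence modules over ℝ² and ε ≥ 0. If there exists a morphism f : M → N^ε with ε-trivial kernel and ε-trivial cokernel, then M and N are ε-interleaved. -/
variable {F : Type} [Field F]

/-- **Morphisms with `ε`-trivial kernel and cokernel give `ε`-interleavings.** If there
is a morphism `f : M → N^ε` with `ε`-trivial kernel and `ε`-trivial cokernel, then `M`
and `N` are `ε`-interleaved. -/
theorem stmt_14 (F : Type) [Field F] [Fintype F] (M N : PersMod F) (ε : ℝ) (hε : 0 ≤ ε)
    (f : ∀ p, M.space p →ₗ[F] N.space (p + (ε, ε)))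
    (hf : IsHomShift M N ε f)
    (hker : TrivialKerS M N ε ε f)
    (hcok : TrivialCokerS M N ε ε f) :
    Interleaved M N ε := by
  have hle : ∀ p : ℝ × ℝ, p ≤ p + (ε, ε) := fun p =>
    le_add_of_nonneg_right (Prod.le_def.mpr ⟨hε, hε⟩)
  -- if two elements have the same image under f p, they agree after shifting by ε
  have kerlem : ∀ (p : ℝ × ℝ) (x x' : M.space p), f p x = f p x' →
      ∀ h : p ≤ p + (ε, ε), M.map h x = M.map h x' := by
    intro p x x' hxx h
    have h0 := hker p (x - x') (by rw [map_sub, hxx, sub_self]) h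
    rw [map_sub, sub_eq_zero] at h0
    exact h0
  -- reindexed form of the cokernel triviality
  have hcok' : ∀ (q : ℝ × ℝ) (y : N.space q) (h : q ≤ q + (ε, ε)),
      ∃ x : M.space q, f q x = N.map h y := by
    intro q
    obtain ⟨p, rfl⟩ : ∃ p : ℝ × ℝ, p + (ε, ε) = q := ⟨q - (ε, ε), by ring⟩
    intro y h
    exact hcok p y h
  choose gx hgx using fun p (y : N.space p) => hcok' p y (hle p)
  -- composition of structure maps
  have mcomp : ∀ {p q r : ℝ × ℝ} (h1 : p ≤ q) (h2 : q ≤ r) (h3 : p ≤ r)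
      (x : M.space p), M.map h2 (M.map h1 x) = M.map h3 x := by
    intro p q r h1 h2 h3 x
    exact LinearMap.congr_fun (M.map_comp h1 h2) x
  have ncomp : ∀ {p q r : ℝ × ℝ} (h1 : p ≤ q) (h2 : q ≤ r) (h3 : p ≤ r)
      (y : N.space p), N.map h2 (N.map h1 y) = N.map h3 y := by
    intro p q r h1 h2 h3 y
    exact LinearMap.congr_fun (N.map_comp h1 h2) y
  let g : ∀ p : ℝ × ℝ, N.space p →ₗ[F] M.space (p + (ε, ε)) := fun p =>
    { toFun := fun y => M.map (hle p) (gx p y)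
      map_add' := fun y₁ y₂ => by
        have h0 : f p (gx p (y₁ + y₂)) = f p (gx p y₁ + gx p y₂) := by
          rw [map_add, hgx, hgx, hgx, map_add]
        show M.map (hle p) (gx p (y₁ + y₂)) =
          M.map (hle p) (gx p y₁) + M.map (hle p) (gx p y₂)
        rw [kerlem p _ _ h0 (hle p), map_add]
      map_smul' := fun c y => by
        have h0 : f p (gx p (c • y)) = f p (c • gx p y) := by
          rw [map_smul, hgx, hgx, map_smul]
        show M.map (hle p) (gx p (c • y)) = c • M.map (hle p) (gx p y)
        rw [kerlem p _ _ h0 (hle p), map_smul] }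
  refine ⟨f, g, hf, ?_, ?_, ?_⟩
  · -- g is a morphism N → M^ε
    intro p q h
    ext y
    show M.map _ (M.map (hle p) (gx p y)) = M.map (hle q) (gx q (N.map h y))
    have hbig : p ≤ q + (ε, ε) := le_trans h (hle q)
    rw [mcomp (hle p) _ hbig]
    have hfeq : f q (M.map h (gx p y)) = f q (gx q (N.map h y)) := by
      have h1 : f q (M.map h (gx p y)) =
          N.map (add_le_add h (le_refl ((ε : ℝ), (ε : ℝ)))) (f p (gx p y)) :=
        (LinearMap.congr_fun (hf h) (gx p y)).symm
      rw [h1, hgx, hgx, ncomp (hle p) _ hbig, ncomp h (hle q) hbig]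
    have := kerlem q _ _ hfeq (hle q)
    rw [← this, mcomp h (hle q) hbig]
  · -- g ∘ f = shift by 2ε on M
    intro p h
    ext x
    show M.map (hle (p + (ε, ε))) (gx (p + (ε, ε)) (f p x)) = M.map h x
    have hfeq : f (p + (ε, ε)) (gx (p + (ε, ε)) (f p x)) =
        f (p + (ε, ε)) (M.map (hle p) x) := by
      rw [hgx]
      exact (LinearMap.congr_fun (hf (hle p)) x)
    rw [kerlem _ _ _ hfeq (hle _), mcomp (hle p) (hle _) h]
  · -- f ∘ g = shift by 2ε on N
    intro p h
    ext y
    show f (p + (ε, ε)) (M.map (hle p) (gx p y)) = N.map h y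
    have h1 : f (p + (ε, ε)) (M.map (hle p) (gx p y)) =
        N.map (add_le_add (hle p) (le_refl ((ε : ℝ), (ε : ℝ)))) (f p (gx p y)) :=
      (LinearMap.congr_fun (hf (hle p)) (gx p y)).symm
    rw [h1, hgx, ncomp (hle p) _ h]
end
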